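/- arXiv:1001.4337 — 9 statements merged into one kernel-verified Lean document; each statement's English description precedes it below -/
import Mathlib

section
/- Let f : [0,1] → ℝ and E ⊆ [0,1] be such that inf_{x∈E} h_f(x) = h for some h > 0. Then the Hausdorff dimension of the graph of f over E satisfies dim_H {(x, f(x)) : x ∈ E} ≤ max( min( (dim_H E)/h , dim_H E + 1 − h ), dim_H E ). -/
open MeasureTheory Filter Set

noncomputable section

abbrev Sig := ℕ → Bool

def shift (t : Sig) : Sig := fun n => t (n + 1)

def birkhoff (φ : Sig → ℝ) (n : ℕ) (t : Sig) : ℝ :=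
  ∑ i ∈ Finset.range n, φ (shift^[i] t)

def cylN (t : Sig) (n : ℕ) : Set Sig := {s | ∀ i < n, s i = t i}

def cylF {n : ℕ} (w : Fin n → Bool) : Set Sig := {t | ∀ i : Fin n, t i = w i}

def takeF {m : ℕ} (w : Fin m → Bool) (k : ℕ) : Fin k → Bool :=
  fun i => if h : (i : ℕ) < m then w ⟨i, h⟩ else false

def takeInf (t : Sig) (k : ℕ) : Fin k → Bool := fun i => t i

noncomputable def lamF {n : ℕ} (w : Fin n → Bool) : ℝ :=
  ∑ i : Fin n, if w i then (2:ℝ) ^ (-((i:ℕ):ℤ) - 1) else 0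

noncomputable def lamInf (t : Sig) : ℝ :=
  ∑' i : ℕ, if t i then (2:ℝ) ^ (-(i:ℤ) - 1) else 0

noncomputable def rho (s t : Sig) : ℝ :=
  sInf {r : ℝ | ∃ n : ℕ, r = (2:ℝ) ^ (-(n:ℤ)) ∧ ∀ i < n, s i = t i}

noncomputable def distH (A B : Set Sig) : ℝ :=
  max (⨆ a ∈ A, ⨅ b ∈ B, rho a b) (⨆ b ∈ B, ⨅ a ∈ A, rho a b)

def HolderPotential (φ : Sig → ℝ) : Prop :=
  ∃ c > 0, ∃ a > 0, ∀ s t, |φ s - φ t| ≤ c * (rho s t) ^ a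

def GibbsOn (X : Set Sig) (φ : Sig → ℝ) (C P : ℝ) (μ : Measure Sig) : Prop :=
  ∀ t ∈ X, ∀ n : ℕ, ∀ t' ∈ cylN t n,
    C⁻¹ * Real.exp (birkhoff φ n t' - n * P) ≤ (μ (cylN t n)).toReal ∧
    (μ (cylN t n)).toReal ≤ C * Real.exp (birkhoff φ n t' - n * P)

def neigh {n : ℕ} (w : Fin n → Bool) : Set (Fin n → Bool) :=
  {u | |lamF u - lamF w| ≤ (2:ℝ) ^ (-(n:ℤ))}

def pairP (p : ℕ) : Set ((Fin (p+1) → Bool) × (Fin (p+1) → Bool)) :=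
  {uv | takeF uv.2 p ∈ neigh (takeF uv.1 p) ∧ uv.2 ∉ neigh uv.1}

noncomputable def oscil (f : ℝ → ℝ) (x r : ℝ) : ℝ :=
  sSup ((fun p : ℝ × ℝ => |f p.1 - f p.2|) ''
    ((Metric.ball x r ∩ Set.Icc 0 1) ×ˢ (Metric.ball x r ∩ Set.Icc 0 1)))

noncomputable def holderExp (f : ℝ → ℝ) (x : ℝ) : ℝ :=
  liminf (fun r => Real.log (oscil f x r) / Real.log r) (nhdsWithin 0 (Set.Ioi 0))

noncomputable def Ijk (j k : ℕ) : Set ℝ :=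
  Set.Ico ((k:ℝ) * (2:ℝ) ^ (-(j:ℤ))) (((k:ℝ) + 1) * (2:ℝ) ^ (-(j:ℤ)))

open scoped Classical in
noncomputable def tauSum (μ : Measure ℝ) (j : ℕ) (q : ℝ) : ℝ :=
  ∑ k ∈ Finset.range (2 ^ j), if μ (Ijk j k) ≠ 0 then (μ (Ijk j k)).toReal ^ q else 0

noncomputable def tauMeas (μ : Measure ℝ) (q : ℝ) : ℝ :=
  liminf (fun j : ℕ => -(1 / (j:ℝ)) * Real.logb 2 (tauSum μ j q)) atTop

noncomputable def xiF (μ : Measure ℝ) (s₀ p₀ : ℝ) (q : ℝ) : ℝ :=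
  q * (s₀ - 1/p₀) + tauMeas μ (q / p₀)

noncomputable def xiStar (μ : Measure ℝ) (s₀ p₀ : ℝ) (h : ℝ) : ℝ :=
  ⨅ q : ℝ, (q * h - xiF μ s₀ p₀ q)

noncomputable def FW {Ω : Type*} (μ : Measure ℝ) (s₀ p₀ : ℝ) (eps : ℕ → ℕ → ℝ)
    (ψ : ℝ → ℝ) (π : ℕ → ℕ → Ω → ℝ) (ω : Ω) (x : ℝ) : ℝ :=
  ∑' j : ℕ, ∑ k ∈ Finset.range (2 ^ j),
    π j k ω * eps j k * (2:ℝ) ^ (-(j:ℝ) * (s₀ - 1/p₀)) * (μ (Ijk j k)).toReal ^ (1/p₀) *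
      ψ ((2:ℝ) ^ (j:ℕ) * x - (k:ℝ))

open scoped Classical in
noncomputable def pressure (X : Set Sig) (φ : Sig → ℝ) : ℝ :=
  liminf (fun n : ℕ => (1 / (n:ℝ)) * Real.log
    (∑ w : Fin n → Bool,
      if (cylF w ∩ X).Nonempty then Real.exp (sSup (birkhoff φ n '' cylF w)) else 0)) atTop

noncomputable def tauPhi (φ : Sig → ℝ) (q : ℝ) : ℝ :=
  (q * pressure Set.univ φ - pressure Set.univ (fun t => q * φ t)) / Real.log 2

noncomputable def tauPhiStar (φ : Sig → ℝ) (α : ℝ) : ℝ := ⨅ q : ℝ, (q * α - tauPhi φ q)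

noncomputable def pGap (X : Set Sig) (φ : Sig → ℝ) (q : ℝ) : ℝ :=
  pressure Set.univ (fun t => q * φ t) - pressure X (fun t => q * φ t)

noncomputable def alphaQ (X : Set Sig) (φ : Sig → ℝ) (q : ℝ) : ℝ :=
  deriv (tauPhi φ) q + deriv (fun q' => pGap X φ q' / Real.log 2) q

noncomputable def hQ (X : Set Sig) (φ : Sig → ℝ) (s₀ p₀ q : ℝ) : ℝ :=
  s₀ - 1/p₀ + alphaQ X φ q / p₀

noncomputable def DQ (X : Set Sig) (φ : Sig → ℝ) (q : ℝ) : ℝ :=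
  tauPhiStar φ (deriv (tauPhi φ) q) -
    (-q * deriv (pGap X φ) q + pGap X φ q) / Real.log 2

section GraphDimAux
open Metric
open scoped ENNReal NNReal

-- Step 1
lemma step1 (f : ℝ → ℝ) (x : ℝ) (γ : ℝ) (hγ : 0 < γ)
    (hh : γ < holderExp f x) :
    ∃ r₀ > 0, ∀ r ∈ Set.Ioo (0:ℝ) r₀, ∀ s ∈ Metric.ball x r ∩ Set.Icc 0 1,
      ∀ t ∈ Metric.ball x r ∩ Set.Icc 0 1, |f s - f t| ≤ r ^ γ := by
  have hS : γ < sSup {a : ℝ | ∀ᶠ r in nhdsWithin 0 (Set.Ioi 0), a ≤ Real.log (oscil f x r) / Real.log r} := by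
    rw [holderExp, liminf_eq] at hh; exact hh
  set S := {a : ℝ | ∀ᶠ r in nhdsWithin 0 (Set.Ioi 0), a ≤ Real.log (oscil f x r) / Real.log r} with hSdef
  have hSne : S.Nonempty := by
    by_contra hne
    rw [not_nonempty_iff_eq_empty] at hne
    rw [hne] at hS
    simp [Real.sSup_empty] at hS; linarith
  obtain ⟨a, haS, hγa⟩ := exists_lt_of_lt_csSup hSne hS
  -- eventually γ < ratio
  have haS' : ∀ᶠ r in nhdsWithin 0 (Set.Ioi 0), a ≤ Real.log (oscil f x r) / Real.log r := haS
  have hev : ∀ᶠ r in nhdsWithin 0 (Set.Ioi 0), γ < Real.log (oscil f x r) / Real.log r :=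
    haS'.mono fun r hr => lt_of_lt_of_le hγa hr
  rw [(nhdsGT_basis (0:ℝ)).eventually_iff] at hev
  obtain ⟨r₁, hr₁, hr₁p⟩ := hev
  refine ⟨min r₁ 1, lt_min hr₁ one_pos, fun r hr s hs t ht => ?_⟩
  obtain ⟨hr0, hrm⟩ := hr
  have hrr₁ : r < r₁ := lt_of_lt_of_le hrm (min_le_left _ _)
  have hr1 : r < 1 := lt_of_lt_of_le hrm (min_le_right _ _)
  have hlogr : Real.log r < 0 := Real.log_neg hr0 hr1
  have hratio : γ < Real.log (oscil f x r) / Real.log r := hr₁p ⟨hr0, hrr₁⟩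
  set A := ((fun p : ℝ × ℝ => |f p.1 - f p.2|) ''
    ((Metric.ball x r ∩ Set.Icc 0 1) ×ˢ (Metric.ball x r ∩ Set.Icc 0 1))) with hA
  have hbdd : BddAbove A := by
    by_contra hb
    have : oscil f x r = 0 := Real.sSup_of_not_bddAbove hb
    rw [this] at hratio
    simp at hratio; linarith
  have hle : |f s - f t| ≤ oscil f x r :=
    le_csSup hbdd ⟨(s, t), ⟨hs, ht⟩, rfl⟩
  rcases le_or_gt (oscil f x r) 0 with hO | hO
  · exact hle.trans (hO.trans (Real.rpow_nonneg hr0.le γ))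
  · have h1 : Real.log (oscil f x r) < γ * Real.log r := by
      rw [lt_div_iff_of_neg hlogr] at hratio; linarith
    have h2 : γ * Real.log r = Real.log (r ^ γ) := (Real.log_rpow hr0 γ).symm
    have : oscil f x r < r ^ γ := by
      rw [← Real.log_lt_log_iff hO (Real.rpow_pos_of_pos hr0 γ), ← h2]; exact h1
    exact hle.trans this.le

-- pointwise Holder on small scales
lemma ptHolder (f : ℝ → ℝ) (F : Set ℝ) (hF : F ⊆ Set.Icc 0 1) (γ r₀ : ℝ)
    (hγ0 : 0 < γ) (hr₀ : 0 < r₀)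
    (hP : ∀ x ∈ F, ∀ r ∈ Set.Ioo (0:ℝ) r₀, ∀ s ∈ Metric.ball x r ∩ Set.Icc 0 1,
      ∀ t ∈ Metric.ball x r ∩ Set.Icc 0 1, |f s - f t| ≤ r ^ γ)
    {x y : ℝ} (hx : x ∈ F) (hy : y ∈ F) (hxy : |x - y| < r₀) :
    |f x - f y| ≤ |x - y| ^ γ := by
  rcases eq_or_ne x y with rfl | hne
  · simp only [sub_self, abs_zero]
    exact Real.rpow_nonneg le_rfl γ
  have hD : 0 < |x - y| := abs_pos.mpr (sub_ne_zero.mpr hne)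
  have hten : Filter.Tendsto (fun r : ℝ => r ^ γ) (nhdsWithin |x - y| (Set.Ioi |x - y|)) (nhds (|x - y| ^ γ)) := by
    apply Filter.Tendsto.mono_left
    · exact (Real.continuousAt_rpow_const _ _ (Or.inl hD.ne')).tendsto
    · exact nhdsWithin_le_nhds
  refine ge_of_tendsto hten ?_
  filter_upwards [Ioo_mem_nhdsGT_of_mem ⟨le_refl _, hxy⟩] with r hr
  have hrpos : 0 < r := hD.trans hr.1
  refine hP x hx r ⟨hrpos, hr.2⟩ x ⟨mem_ball_self hrpos, hF hx⟩ y ⟨?_, hF hy⟩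
  rw [mem_ball, Real.dist_eq]
  rw [abs_sub_comm]; exact hr.1

lemma lemA1 (f : ℝ → ℝ) (F : Set ℝ) (hF : F ⊆ Set.Icc 0 1) (γ r₀ : ℝ)
    (hγ0 : 0 < γ) (hγ1 : γ ≤ 1) (hr₀ : 0 < r₀)
    (hP : ∀ x ∈ F, ∀ r ∈ Set.Ioo (0:ℝ) r₀, ∀ s ∈ Metric.ball x r ∩ Set.Icc 0 1,
      ∀ t ∈ Metric.ball x r ∩ Set.Icc 0 1, |f s - f t| ≤ r ^ γ) :
    dimH ((fun x => (x, f x)) '' F) ≤ dimH F / ENNReal.ofReal γ := by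
  set g : ℝ → ℝ × ℝ := fun x => (x, f x) with hg
  set Fk : ℕ → Set ℝ := fun k => F ∩ Set.Icc ((k : ℝ) * (r₀ / 2)) (((k : ℝ) + 1) * (r₀ / 2)) with hFk
  have hcover : F = ⋃ k, Fk k := by
    ext x; simp only [hFk, Set.mem_iUnion, Set.mem_inter_iff, Set.mem_Icc]
    constructor
    · intro hx
      have hx0 : 0 ≤ x := (hF hx).1
      refine ⟨Nat.floor (x / (r₀ / 2)), hx, ?_, ?_⟩
      · calc (Nat.floor (x / (r₀/2)) : ℝ) * (r₀/2) ≤ (x / (r₀/2)) * (r₀/2) := by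
              apply mul_le_mul_of_nonneg_right (Nat.floor_le (by positivity)) (by positivity)
          _ = x := by field_simp
      · have := Nat.lt_succ_floor (x / (r₀/2))
        calc x = (x / (r₀/2)) * (r₀/2) := by field_simp
          _ ≤ ((Nat.floor (x / (r₀/2)) : ℝ) + 1) * (r₀/2) := by
              apply mul_le_mul_of_nonneg_right _ (by positivity)
              push_cast at this ⊢
              exact this.le
    · rintro ⟨k, hx, _⟩; exact hx
  have hHolder : ∀ k, HolderOnWith 1 γ.toNNReal g (Fk k) := by
    intro k x hx y hy
    have hxF := hx.1; have hyF := hy.1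
    have hxy : |x - y| ≤ r₀ / 2 := by
      have h1 := hx.2; have h2 := hy.2
      rw [abs_le]
      constructor <;> simp only [Set.mem_Icc] at h1 h2 <;> nlinarith
    have hxyr : |x - y| < r₀ := lt_of_le_of_lt hxy (by linarith)
    have hfb : |f x - f y| ≤ |x - y| ^ γ := ptHolder f F hF γ r₀ hγ0 hr₀ hP hxF hyF hxyr
    have hxb : |x - y| ≤ |x - y| ^ γ := by
      rcases eq_or_lt_of_le (abs_nonneg (x - y)) with h0 | h0
      · rw [← h0]; simp [Real.zero_rpow hγ0.ne']
      · have hle1 : |x - y| ≤ 1 := by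
          have := (hF hxF).1; have := (hF hxF).2; have := (hF hyF).1; have := (hF hyF).2
          rw [abs_le]; constructor <;> linarith
        calc |x - y| = |x - y| ^ (1:ℝ) := (Real.rpow_one _).symm
          _ ≤ |x - y| ^ γ := Real.rpow_le_rpow_of_exponent_ge h0 hle1 hγ1
    have hdist : dist (g x) (g y) ≤ |x - y| ^ γ := by
      rw [hg]; rw [Prod.dist_eq, Real.dist_eq, Real.dist_eq]
      exact max_le hxb hfb
    calc edist (g x) (g y) = ENNReal.ofReal (dist (g x) (g y)) := (edist_dist _ _)
      _ ≤ ENNReal.ofReal (|x - y| ^ γ) := ENNReal.ofReal_le_ofReal hdist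
      _ = ENNReal.ofReal |x - y| ^ γ := (ENNReal.ofReal_rpow_of_nonneg (abs_nonneg _) hγ0.le).symm
      _ = 1 * edist x y ^ (γ.toNNReal : ℝ) := by
          rw [one_mul, edist_dist, Real.dist_eq, Real.coe_toNNReal _ hγ0.le]
  have himg : g '' F = ⋃ k, g '' Fk k := by rw [hcover, Set.image_iUnion]
  rw [himg, dimH_iUnion]
  refine iSup_le fun k => ?_
  calc dimH (g '' Fk k) ≤ dimH (Fk k) / (γ.toNNReal : ℝ≥0∞) :=
        (hHolder k).dimH_image_le (Real.toNNReal_pos.mpr hγ0)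
    _ ≤ dimH F / ENNReal.ofReal γ := by
        rw [ENNReal.ofReal]
        gcongr
        exact Set.inter_subset_left

lemma coverF {F : Set ℝ} {s' : ℝ} (hμ : μH[s'] F = 0) {δ : ℝ} (hδ : 0 < δ) :
    ∃ U : ℕ → Set ℝ, (F ⊆ ⋃ n, U n) ∧ (∀ n, EMetric.diam (U n) ≤ ENNReal.ofReal δ) ∧
      (∑' n, ⨆ _ : (U n).Nonempty, EMetric.diam (U n) ^ s') ≤ 1 := by
  have h := MeasureTheory.Measure.hausdorffMeasure_apply s' F
  rw [hμ] at h
  have h2 : (⨅ (U : ℕ → Set ℝ) (_ : F ⊆ ⋃ n, U n)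
      (_ : ∀ n, EMetric.diam (U n) ≤ ENNReal.ofReal δ),
      ∑' n, ⨆ _ : (U n).Nonempty, EMetric.diam (U n) ^ s') ≤ 0 := by
    rw [h]
    exact le_iSup₂_of_le (ENNReal.ofReal δ) (by simpa using hδ) le_rfl
  have h3 : (⨅ (U : ℕ → Set ℝ) (_ : F ⊆ ⋃ n, U n)
      (_ : ∀ n, EMetric.diam (U n) ≤ ENNReal.ofReal δ),
      ∑' n, ⨆ _ : (U n).Nonempty, EMetric.diam (U n) ^ s') < 1 :=
    lt_of_le_of_lt h2 zero_lt_one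
  simp only [iInf_lt_iff] at h3
  obtain ⟨U, hU1, hU2, hU3⟩ := h3
  exact ⟨U, hU1, hU2, hU3.le⟩

lemma boxcover (f : ℝ → ℝ) (F : Set ℝ) (hF : F ⊆ Set.Icc 0 1) (γ r₀ : ℝ)
    (hγ0 : 0 < γ) (hγ1 : γ ≤ 1) (hr₀ : 0 < r₀)
    (hP : ∀ x ∈ F, ∀ r ∈ Set.Ioo (0:ℝ) r₀, ∀ s ∈ Metric.ball x r ∩ Set.Icc 0 1,
      ∀ t ∈ Metric.ball x r ∩ Set.Icc 0 1, |f s - f t| ≤ r ^ γ)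
    (s' t e1 : ℝ) (hs' : 0 < s') (he1 : 0 < e1) (ht : t = s' + e1 + (1 - γ))
    (δ : ℝ) (hδ0 : 0 < δ) (hδr : δ ≤ r₀ / 4) (hδ1 : δ ≤ 1 / 4)
    (U : ℕ → Set ℝ) (hU1 : F ⊆ ⋃ n, U n)
    (hU2 : ∀ n, EMetric.diam (U n) ≤ ENNReal.ofReal δ)
    (hU3 : (∑' n, ⨆ _ : (U n).Nonempty, EMetric.diam (U n) ^ s') ≤ 1) :
    ∃ B : ℕ × ℕ → Set (ℝ × ℝ),
      ((fun x => (x, f x)) '' F ⊆ ⋃ p, B p) ∧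
      (∀ p, EMetric.diam (B p) ≤ ENNReal.ofReal (2 * δ)) ∧
      (∑' p, EMetric.diam (B p) ^ t) ≤ ENNReal.ofReal (4 * (2*δ) ^ e1 * 2 ^ s') := by
  classical
  have htpos : 0 < t := by nlinarith
  set L : ℕ → ℝ := fun n => (EMetric.diam (U n)).toReal with hLdef
  have hdiam_ne : ∀ n, EMetric.diam (U n) ≠ ⊤ :=
    fun n => ne_top_of_le_ne_top ENNReal.ofReal_ne_top (hU2 n)
  have hL0 : ∀ n, 0 ≤ L n := fun n => ENNReal.toReal_nonneg
  have hLδ : ∀ n, L n ≤ δ := fun n => ENNReal.toReal_le_of_le_ofReal hδ0.le (hU2 n)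
  set rn : ℕ → ℝ := fun n => 2 * L n with hrndef
  have hrn0 : ∀ n, 0 ≤ rn n := fun n => by positivity
  have hrnδ : ∀ n, rn n ≤ 2 * δ := fun n => by
    have := hLδ n; simp only [hrndef]; linarith
  have hrn1 : ∀ n, rn n ≤ 1 / 2 := fun n => by have := hrnδ n; linarith
  set M : ℕ → ℕ := fun n => Nat.ceil (2 * (rn n) ^ γ / rn n) + 1 with hMdef
  set xc : ℕ → ℝ := fun n => if hn : (U n ∩ F).Nonempty then hn.some else 0 with hxcdef
  have hxc : ∀ n, (U n ∩ F).Nonempty → xc n ∈ U n ∩ F := by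
    intro n hn; simp only [hxcdef, dif_pos hn]; exact hn.some_mem
  set c : ℕ → ℝ := fun n => f (xc n) - (rn n) ^ γ with hcdef
  set B : ℕ × ℕ → Set (ℝ × ℝ) := fun p =>
    if (U p.1 ∩ F).Nonempty ∧ p.2 < M p.1 then
      Set.Icc (xc p.1 - L p.1) (xc p.1 + L p.1) ×ˢ
        Set.Icc (c p.1 + p.2 * rn p.1) (c p.1 + (p.2 + 1) * rn p.1)
    else ∅ with hBdef
  have hBpos : ∀ p : ℕ × ℕ, ((U p.1 ∩ F).Nonempty ∧ p.2 < M p.1) →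
      B p = Set.Icc (xc p.1 - L p.1) (xc p.1 + L p.1) ×ˢ
        Set.Icc (c p.1 + p.2 * rn p.1) (c p.1 + (p.2 + 1) * rn p.1) := by
    intro p hp; simp only [hBdef]; rw [if_pos hp]
  have hBneg : ∀ p : ℕ × ℕ, ¬((U p.1 ∩ F).Nonempty ∧ p.2 < M p.1) → B p = ∅ := by
    intro p hp; simp only [hBdef]; rw [if_neg hp]
  -- diameter bound
  have hdiamB : ∀ p : ℕ × ℕ, EMetric.diam (B p) ≤ ENNReal.ofReal (rn p.1) := by
    intro p
    by_cases hp : (U p.1 ∩ F).Nonempty ∧ p.2 < M p.1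
    · rw [hBpos p hp]
      refine EMetric.diam_le ?_
      rintro a ⟨ha1, ha2⟩ b ⟨hb1, hb2⟩
      rw [Prod.edist_eq]
      have key : ∀ u v lo hi : ℝ, u ∈ Set.Icc lo hi → v ∈ Set.Icc lo hi →
          edist u v ≤ ENNReal.ofReal (hi - lo) := by
        intro u v lo hi hu hv
        rw [edist_dist, Real.dist_eq]
        apply ENNReal.ofReal_le_ofReal
        rw [abs_le]
        simp only [Set.mem_Icc] at hu hv
        constructor <;> linarith
      have h1 := key _ _ _ _ ha1 hb1
      have h2 := key _ _ _ _ ha2 hb2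
      refine max_le (h1.trans (ENNReal.ofReal_le_ofReal ?_)) (h2.trans (le_of_eq ?_))
      · simp only [hrndef]; linarith
      · congr 1; ring
    · rw [hBneg p hp]; simp [EMetric.diam]
  -- oscillation control
  have hosc : ∀ n, (U n ∩ F).Nonempty → ∀ y ∈ U n ∩ F, |f y - f (xc n)| ≤ (rn n) ^ γ := by
    intro n hn y hy
    have hxcn := hxc n hn
    have hdist : |y - xc n| ≤ L n := by
      have h1 : edist y (xc n) ≤ EMetric.diam (U n) :=
        EMetric.edist_le_diam_of_mem hy.1 hxcn.1
      have h2 : dist y (xc n) ≤ L n := by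
        rw [dist_edist]
        exact ENNReal.toReal_mono (hdiam_ne n) h1
      rwa [Real.dist_eq] at h2
    rcases eq_or_lt_of_le (hL0 n) with h0 | h0
    · have hy0 : y = xc n := by
        have h3 : |y - xc n| ≤ 0 := by rw [← h0] at hdist; exact hdist
        have h4 := abs_nonpos_iff.mp h3; linarith [sub_eq_zero.mp h4]
      rw [hy0, sub_self, abs_zero]
      exact Real.rpow_nonneg (hrn0 n) γ
    · have hrnpos : 0 < rn n := by simp only [hrndef]; linarith
      have hrnr₀ : rn n < r₀ := lt_of_le_of_lt (hrnδ n) (by linarith)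
      refine hP (xc n) hxcn.2 (rn n) ⟨hrnpos, hrnr₀⟩ y ⟨?_, hF hy.2⟩ (xc n)
        ⟨mem_ball_self hrnpos, hF hxcn.2⟩
      rw [mem_ball, Real.dist_eq]
      calc |y - xc n| ≤ L n := hdist
        _ < rn n := by simp only [hrndef]; linarith
  refine ⟨B, ?_, fun p => (hdiamB p).trans (ENNReal.ofReal_le_ofReal (hrnδ p.1)), ?_⟩
  · -- covering
    rintro p ⟨x, hxF, rfl⟩
    obtain ⟨n, hn⟩ := Set.mem_iUnion.mp (hU1 hxF)
    have hnne : (U n ∩ F).Nonempty := ⟨x, hn, hxF⟩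
    have hxcn := hxc n hnne
    have hdx : |x - xc n| ≤ L n := by
      have h1 : edist x (xc n) ≤ EMetric.diam (U n) :=
        EMetric.edist_le_diam_of_mem hn hxcn.1
      have h2 : dist x (xc n) ≤ L n := by
        rw [dist_edist]; exact ENNReal.toReal_mono (hdiam_ne n) h1
      rwa [Real.dist_eq] at h2
    have hfb : |f x - f (xc n)| ≤ (rn n) ^ γ := hosc n hnne x ⟨hn, hxF⟩
    rcases eq_or_lt_of_le (hrn0 n) with h0 | h0
    · refine Set.mem_iUnion.mpr ⟨(n, 0), ?_⟩
      rw [hBpos (n, 0) ⟨hnne, Nat.succ_pos _⟩]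
      have hr0 : rn n = 0 := h0.symm
      have hL00 : L n = 0 := by simp only [hrndef] at hr0; linarith
      have hx0 : x = xc n := by
        rw [hL00] at hdx
        have h4 := abs_nonpos_iff.mp hdx; linarith [sub_eq_zero.mp h4]
      have hfx : f x = f (xc n) := by rw [hx0]
      have hrγ : (rn n) ^ γ = 0 := by rw [hr0]; exact Real.zero_rpow hγ0.ne'
      rw [Set.mem_prod]
      constructor
      · simp only [Set.mem_Icc, hx0, hL00]; constructor <;> linarith
      · simp only [Set.mem_Icc, hcdef, hfx, hrγ, hr0, Real.zero_rpow hγ0.ne']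
        norm_num
    · set j : ℕ := Nat.floor ((f x - c n) / rn n) with hjdef
      have hfc0 : 0 ≤ f x - c n := by
        simp only [hcdef]
        have := abs_le.mp hfb; linarith
      have hfc2 : f x - c n ≤ 2 * (rn n) ^ γ := by
        simp only [hcdef]
        have := abs_le.mp hfb; linarith
      have hjM : j < M n := by
        have h1 : j ≤ Nat.ceil (2 * (rn n) ^ γ / rn n) := by
          refine le_trans (Nat.floor_mono ?_) (Nat.floor_le_ceil _)
          gcongr
        simp only [hMdef]; omega
      refine Set.mem_iUnion.mpr ⟨(n, j), ?_⟩
      rw [hBpos (n, j) ⟨hnne, hjM⟩, Set.mem_prod]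
      constructor
      · simp only [Set.mem_Icc]
        have := abs_le.mp hdx; constructor <;> linarith
      · simp only [Set.mem_Icc]
        have h1 : (j : ℝ) * rn n ≤ f x - c n := by
          rw [hjdef]
          calc (Nat.floor ((f x - c n) / rn n) : ℝ) * rn n ≤ ((f x - c n) / rn n) * rn n := by
                apply mul_le_mul_of_nonneg_right (Nat.floor_le (by positivity)) h0.le
            _ = f x - c n := by field_simp
        have h2 : f x - c n < ((j : ℝ) + 1) * rn n := by
          have h3 := Nat.lt_succ_floor ((f x - c n) / rn n)
          calc f x - c n = ((f x - c n) / rn n) * rn n := by field_simp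
            _ < ((j : ℝ) + 1) * rn n := by
                apply mul_lt_mul_of_pos_right _ h0
                rw [hjdef]; push_cast at h3 ⊢; exact h3
        constructor <;> linarith
  · -- sum bound
    have htp : (∑' p : ℕ × ℕ, EMetric.diam (B p) ^ t) =
        ∑' n, ∑' j, EMetric.diam (B (n, j)) ^ t :=
        ENNReal.tsum_prod (f := fun n j => EMetric.diam (B (n, j)) ^ t)
    rw [htp]
    have hper : ∀ n, (∑' j, EMetric.diam (B (n, j)) ^ t) ≤
        ENNReal.ofReal (4 * (2*δ) ^ e1 * 2 ^ s') *
          (⨆ _ : (U n).Nonempty, EMetric.diam (U n) ^ s') := by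
      intro n
      by_cases hn : (U n ∩ F).Nonempty
      · have hUne : (U n).Nonempty := hn.mono Set.inter_subset_left
        rw [iSup_pos hUne]
        have hBj : ∀ j, EMetric.diam (B (n, j)) ^ t ≤
            if j < M n then ENNReal.ofReal (rn n) ^ t else 0 := by
          intro j
          by_cases hj : j < M n
          · rw [if_pos hj]
            exact ENNReal.rpow_le_rpow (hdiamB (n, j)) htpos.le
          · rw [if_neg hj, hBneg (n, j) (fun hc => hj hc.2)]
            simp [EMetric.diam, ENNReal.zero_rpow_of_pos htpos]
        have hreal : (M n : ℝ) * rn n ^ t ≤ 4 * (2*δ) ^ e1 * 2 ^ s' * L n ^ s' := by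
          rcases eq_or_lt_of_le (hrn0 n) with h0 | h0
          · rw [← h0, Real.zero_rpow htpos.ne', mul_zero]
            positivity
          · have hrle1 : rn n ≤ 1 := (hrn1 n).trans (by norm_num)
            have hMle : (M n : ℝ) ≤ 2 * rn n ^ (γ - 1) + 2 := by
              have h1 : (Nat.ceil (2 * rn n ^ γ / rn n) : ℝ) < 2 * rn n ^ γ / rn n + 1 :=
                Nat.ceil_lt_add_one (div_nonneg (by positivity) h0.le)
              have h2 : 2 * rn n ^ γ / rn n = 2 * rn n ^ (γ - 1) := by
                rw [Real.rpow_sub h0, Real.rpow_one]; ring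
              simp only [hMdef]; push_cast; rw [h2] at h1 ⊢; linarith
            have key1 : rn n ^ t = rn n ^ s' * rn n ^ (e1 + (1 - γ)) := by
              rw [← Real.rpow_add h0]; congr 1; rw [ht]; ring
            have key2 : rn n ^ (γ - 1) * rn n ^ t = rn n ^ s' * rn n ^ e1 := by
              rw [← Real.rpow_add h0, ← Real.rpow_add h0]
              congr 1; rw [ht]; ring
            have hb1 : rn n ^ e1 ≤ (2*δ) ^ e1 := Real.rpow_le_rpow (hrn0 n) (hrnδ n) he1.le
            have hb2 : rn n ^ (e1 + (1-γ)) ≤ (2*δ) ^ e1 :=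
              (Real.rpow_le_rpow_of_exponent_ge h0 hrle1 (by linarith)).trans hb1
            have hs'b : rn n ^ s' = 2 ^ s' * L n ^ s' := by
              simp only [hrndef]
              exact Real.mul_rpow (by norm_num) (hL0 n)
            have hrs : 0 ≤ rn n ^ s' := Real.rpow_nonneg (hrn0 n) s'
            calc (M n : ℝ) * rn n ^ t ≤ (2 * rn n ^ (γ-1) + 2) * rn n ^ t := by
                  apply mul_le_mul_of_nonneg_right hMle (Real.rpow_nonneg (hrn0 n) t)
              _ = 2 * (rn n ^ (γ-1) * rn n ^ t) + 2 * rn n ^ t := by ring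
              _ = 2 * (rn n ^ s' * rn n ^ e1) + 2 * (rn n ^ s' * rn n ^ (e1 + (1-γ))) := by
                  rw [key2, key1]
              _ ≤ 2 * (rn n ^ s' * (2*δ)^e1) + 2 * (rn n ^ s' * (2*δ)^e1) := by gcongr
              _ = 4 * (2*δ)^e1 * rn n ^ s' := by ring
              _ = 4 * (2*δ)^e1 * 2^s' * L n ^ s' := by rw [hs'b]; ring
        calc (∑' j, EMetric.diam (B (n, j)) ^ t)
            ≤ ∑' j, (if j < M n then ENNReal.ofReal (rn n) ^ t else 0) :=
              ENNReal.tsum_le_tsum hBj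
          _ = ∑ j ∈ Finset.range (M n), (if j < M n then ENNReal.ofReal (rn n) ^ t else 0) := by
              refine tsum_eq_sum ?_
              intro b hb
              rw [if_neg (by simpa using hb)]
          _ = ∑ j ∈ Finset.range (M n), ENNReal.ofReal (rn n) ^ t := by
              refine Finset.sum_congr rfl fun j hj => ?_
              rw [if_pos (Finset.mem_range.mp hj)]
          _ = (M n : ℝ≥0∞) * ENNReal.ofReal (rn n) ^ t := by
              rw [Finset.sum_const, Finset.card_range, nsmul_eq_mul]
          _ = ENNReal.ofReal ((M n : ℝ) * rn n ^ t) := by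
              rw [ENNReal.ofReal_rpow_of_nonneg (hrn0 n) htpos.le,
                ENNReal.ofReal_mul (by positivity), ENNReal.ofReal_natCast]
          _ ≤ ENNReal.ofReal (4 * (2*δ) ^ e1 * 2 ^ s' * L n ^ s') :=
              ENNReal.ofReal_le_ofReal hreal
          _ = ENNReal.ofReal (4 * (2*δ) ^ e1 * 2 ^ s') * ENNReal.ofReal (L n ^ s') := by
              rw [ENNReal.ofReal_mul (by positivity)]
          _ = ENNReal.ofReal (4 * (2*δ) ^ e1 * 2 ^ s') * EMetric.diam (U n) ^ s' := by
              have hL : ENNReal.ofReal (L n ^ s') = EMetric.diam (U n) ^ s' := by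
                rw [← ENNReal.ofReal_rpow_of_nonneg (hL0 n) hs'.le]
                congr 1
                simp only [hLdef]
                exact ENNReal.ofReal_toReal (hdiam_ne n)
              rw [hL]
      · have hBn : ∀ j : ℕ, B (n, j) = ∅ := fun j => hBneg (n, j) (fun hc => hn hc.1)
        simp [EMetric.diam, hBn, ENNReal.zero_rpow_of_pos htpos]
    calc (∑' n, ∑' j, EMetric.diam (B (n, j)) ^ t)
        ≤ ∑' n, ENNReal.ofReal (4 * (2*δ) ^ e1 * 2 ^ s') *
            (⨆ _ : (U n).Nonempty, EMetric.diam (U n) ^ s') := ENNReal.tsum_le_tsum hper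
      _ = ENNReal.ofReal (4 * (2*δ) ^ e1 * 2 ^ s') *
            ∑' n, (⨆ _ : (U n).Nonempty, EMetric.diam (U n) ^ s') := ENNReal.tsum_mul_left
      _ ≤ ENNReal.ofReal (4 * (2*δ) ^ e1 * 2 ^ s') * 1 := mul_le_mul_right hU3 _
      _ = ENNReal.ofReal (4 * (2*δ) ^ e1 * 2 ^ s') := mul_one _

lemma lemA2 (f : ℝ → ℝ) (F : Set ℝ) (hF : F ⊆ Set.Icc 0 1) (γ r₀ : ℝ)
    (hγ0 : 0 < γ) (hγ1 : γ ≤ 1) (hr₀ : 0 < r₀)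
    (hP : ∀ x ∈ F, ∀ r ∈ Set.Ioo (0:ℝ) r₀, ∀ s ∈ Metric.ball x r ∩ Set.Icc 0 1,
      ∀ t ∈ Metric.ball x r ∩ Set.Icc 0 1, |f s - f t| ≤ r ^ γ) :
    dimH ((fun x => (x, f x)) '' F) ≤ dimH F + ENNReal.ofReal (1 - γ) := by
  have hdF_le : dimH F ≤ 1 := by
    have := dimH_mono (Set.subset_univ F)
    rwa [Real.dimH_univ] at this
  have hdF_ne : dimH F ≠ ⊤ := (hdF_le.trans_lt (by norm_num)).ne
  refine ENNReal.le_of_forall_pos_le_add fun ε hε hfin => ?_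
  set dr : ℝ := (dimH F).toReal with hdr
  set s' : ℝ := dr + ε / 2 with hs'def
  set e1 : ℝ := (ε : ℝ) / 2 with he1def
  set t : ℝ := s' + e1 + (1 - γ) with htdef
  have hεpos : (0:ℝ) < ε := hε
  have hdr0 : 0 ≤ dr := ENNReal.toReal_nonneg
  have hs'pos : 0 < s' := by positivity
  have he1pos : 0 < e1 := by positivity
  have htpos : 0 < t := by simp only [htdef]; nlinarith
  -- μH[s'] F = 0
  have hμF : μH[s'] F = 0 := by
    have h1 : dimH F < ((s'.toNNReal : ℝ≥0) : ℝ≥0∞) := by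
      rw [ENNReal.coe_nnreal_eq, Real.coe_toNNReal _ hs'pos.le]
      rw [← ENNReal.ofReal_toReal hdF_ne, ← hdr]
      exact ENNReal.ofReal_lt_ofReal_iff hs'pos |>.mpr (by simp only [hs'def]; linarith)
    have h2 := hausdorffMeasure_of_dimH_lt h1
    rwa [Real.coe_toNNReal _ hs'pos.le] at h2
  set δ₀ : ℝ := min (r₀ / 4) (1 / 4) with hδ₀def
  have hδ₀pos : 0 < δ₀ := lt_min (by linarith) (by norm_num)
  -- key bound
  have key : ∀ δ ∈ Set.Ioc (0:ℝ) δ₀, μH[t] ((fun x => (x, f x)) '' F) ≤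
      ENNReal.ofReal (4 * (2*δ) ^ e1 * 2 ^ s') := by
    intro δ hδ
    rw [MeasureTheory.Measure.hausdorffMeasure_apply]
    refine iSup₂_le fun R hR => ?_
    set δ' : ℝ := min δ ((min R 1).toReal / 2) with hδ'def
    have hminR : (0:ℝ≥0∞) < min R 1 := lt_min hR (by norm_num)
    have hminR_ne : min R 1 ≠ ⊤ := by
      exact ne_top_of_le_ne_top (by norm_num) (min_le_right _ _)
    have hminR_toReal : 0 < (min R 1).toReal := ENNReal.toReal_pos hminR.ne' hminR_ne
    have hδ'pos : 0 < δ' := lt_min hδ.1 (by positivity)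
    have hδ'δ : δ' ≤ δ := min_le_left _ _
    obtain ⟨U, hU1, hU2, hU3⟩ := coverF hμF hδ'pos
    obtain ⟨B, hB1, hB2, hB3⟩ := boxcover f F hF γ r₀ hγ0 hγ1 hr₀ hP s' t e1 hs'pos he1pos
      htdef δ' hδ'pos (hδ'δ.trans (hδ.2.trans (min_le_left _ _)))
      (hδ'δ.trans (hδ.2.trans (min_le_right _ _))) U hU1 hU2 hU3
    set e : ℕ ≃ ℕ × ℕ := (Denumerable.eqv (ℕ × ℕ)).symm with hedef
    set V : ℕ → Set (ℝ × ℝ) := fun i => B (e i) with hVdef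
    have hVcov : (fun x => (x, f x)) '' F ⊆ ⋃ i, V i := by
      refine hB1.trans ?_
      intro p hp
      obtain ⟨q, hq⟩ := Set.mem_iUnion.mp hp
      exact Set.mem_iUnion.mpr ⟨e.symm q, by simp only [hVdef, Equiv.apply_symm_apply]; exact hq⟩
    have hVdiam : ∀ i, EMetric.diam (V i) ≤ R := by
      intro i
      refine (hB2 (e i)).trans ?_
      have h2δ' : (2 * δ' : ℝ) ≤ (min R 1).toReal := by
        have := min_le_right δ ((min R 1).toReal / 2); simp only [hδ'def] at *
        nlinarith [min_le_right δ ((min R 1).toReal / 2)]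
      calc ENNReal.ofReal (2 * δ') ≤ ENNReal.ofReal ((min R 1).toReal) :=
            ENNReal.ofReal_le_ofReal h2δ'
        _ = min R 1 := ENNReal.ofReal_toReal hminR_ne
        _ ≤ R := min_le_left _ _
    refine iInf_le_of_le V (iInf_le_of_le hVcov (iInf_le_of_le hVdiam ?_))
    have hsum : (∑' i, ⨆ _ : (V i).Nonempty, EMetric.diam (V i) ^ t) ≤
        ∑' i, EMetric.diam (V i) ^ t := by
      refine ENNReal.tsum_le_tsum fun i => ?_
      exact iSup_le fun _ => le_rfl
    have hsum2 : (∑' i, EMetric.diam (V i) ^ t) = ∑' p, EMetric.diam (B p) ^ t :=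
      e.tsum_eq (fun p => EMetric.diam (B p) ^ t)
    refine hsum.trans ?_
    rw [hsum2]
    refine hB3.trans (ENNReal.ofReal_le_ofReal ?_)
    have h1 : (2*δ')^e1 ≤ (2*δ)^e1 :=
      Real.rpow_le_rpow (by positivity) (by linarith) he1pos.le
    have h2 : (0:ℝ) < 2 ^ s' := Real.rpow_pos_of_pos (by norm_num) s'
    nlinarith [Real.rpow_nonneg (show (0:ℝ) ≤ 2*δ' by positivity) e1]
  -- take δ → 0
  have hlim : Tendsto (fun δ : ℝ => ENNReal.ofReal (4 * (2*δ) ^ e1 * 2 ^ s'))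
      (nhdsWithin 0 (Set.Ioi 0)) (nhds 0) := by
    have hc : ContinuousAt (fun δ : ℝ => 4 * (2*δ) ^ e1 * 2 ^ s') 0 := by
      have h1 : ContinuousAt (fun x : ℝ => x ^ e1) ((fun δ : ℝ => 2 * δ) 0) := by
        simpa using Real.continuousAt_rpow_const 0 e1 (Or.inr he1pos.le)
      have h2 : ContinuousAt (fun δ : ℝ => 2 * δ) 0 := by fun_prop
      exact (continuousAt_const.mul (h1.comp h2)).mul continuousAt_const
    have h0 : 4 * (2*(0:ℝ)) ^ e1 * 2 ^ s' = 0 := by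
      simp [Real.zero_rpow he1pos.ne']
    have hreal : Tendsto (fun δ : ℝ => 4 * (2*δ) ^ e1 * 2 ^ s')
        (nhdsWithin 0 (Set.Ioi 0)) (nhds 0) := by
      have := hc.tendsto.mono_left (nhdsWithin_le_nhds (s := Set.Ioi (0:ℝ)))
      have h0' : (4:ℝ) * (0:ℝ) ^ e1 * 2 ^ s' = 0 := by simp [Real.zero_rpow he1pos.ne']
      simp only [mul_zero] at this
      rw [h0'] at this
      exact this
    have := (ENNReal.continuous_ofReal.tendsto 0).comp hreal
    rw [ENNReal.ofReal_zero] at this; exact this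
  have hev : ∀ᶠ δ in nhdsWithin (0:ℝ) (Set.Ioi 0), μH[t] ((fun x => (x, f x)) '' F) ≤
      ENNReal.ofReal (4 * (2*δ) ^ e1 * 2 ^ s') := by
    filter_upwards [Ioc_mem_nhdsGT_of_mem ⟨le_refl (0:ℝ), hδ₀pos⟩] with δ hδ
    exact key δ hδ
  have hμG : μH[t] ((fun x => (x, f x)) '' F) = 0 := by
    have h1 : μH[t] ((fun x => (x, f x)) '' F) ≤ 0 := ge_of_tendsto hlim hev
    exact le_antisymm h1 (zero_le)
  -- conclude
  have hdim : dimH ((fun x => (x, f x)) '' F) ≤ ENNReal.ofReal t := by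
    have h1 : μH[((t.toNNReal : ℝ≥0) : ℝ)] ((fun x => (x, f x)) '' F) ≠ ⊤ := by
      rw [Real.coe_toNNReal _ htpos.le, hμG]
      exact ENNReal.zero_ne_top
    have h2 := dimH_le_of_hausdorffMeasure_ne_top h1
    rwa [ENNReal.coe_nnreal_eq, Real.coe_toNNReal _ htpos.le] at h2
  refine hdim.trans ?_
  have : ENNReal.ofReal t = ENNReal.ofReal dr + ENNReal.ofReal (1 - γ) + ENNReal.ofReal ε := by
    rw [← ENNReal.ofReal_add hdr0 (by linarith), ← ENNReal.ofReal_add (by linarith) hεpos.le]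
    congr 1
    simp only [htdef, hs'def, he1def]; ring
  rw [this, ENNReal.ofReal_coe_nnreal]
  have hdrr : ENNReal.ofReal dr = dimH F := by rw [hdr]; exact ENNReal.ofReal_toReal hdF_ne
  rw [hdrr]

end GraphDimAux

theorem graph_dimension_upper_bound
    (f : ℝ → ℝ) (E : Set ℝ) (hE : E ⊆ Set.Icc 0 1)
    (h : ℝ) (hpos : 0 < h) (hinf : sInf (holderExp f '' E) = h) :
    dimH ((fun x => (x, f x)) '' E) ≤
      max (min (dimH E / ENNReal.ofReal h) (dimH E + 1 - ENNReal.ofReal h)) (dimH E) := by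
  rcases Set.eq_empty_or_nonempty E with rfl | hEne
  · simp
  -- lower bound on holder exponents
  have hbddB : BddBelow (holderExp f '' E) := by
    by_contra hb
    rw [Real.sInf_of_not_bddBelow hb] at hinf
    linarith
  have hexp : ∀ x ∈ E, h ≤ holderExp f x := fun x hx =>
    hinf ▸ csInf_le hbddB ⟨x, hx, rfl⟩
  set g : ℝ → ℝ × ℝ := fun x => (x, f x) with hg
  set h' : ℝ := min h 1 with hh'def
  have hh'pos : 0 < h' := lt_min hpos one_pos
  have hh'le1 : h' ≤ 1 := min_le_right _ _
  have hh'leh : h' ≤ h := min_le_left _ _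
  -- decomposition bound
  have hbound : ∀ γ ∈ Set.Ioo (0:ℝ) h',
      dimH (g '' E) ≤ dimH E / ENNReal.ofReal γ ∧
      dimH (g '' E) ≤ dimH E + ENNReal.ofReal (1 - γ) := by
    intro γ hγ
    have hγ0 : 0 < γ := hγ.1
    have hγ1 : γ ≤ 1 := (hγ.2.trans_le hh'le1).le
    have hγh : γ < h := hγ.2.trans_le hh'leh
    set Em : ℕ → Set ℝ := fun m => {x ∈ E | ∀ r ∈ Set.Ioo (0:ℝ) (1/((m:ℝ)+1)),
      ∀ s ∈ Metric.ball x r ∩ Set.Icc 0 1, ∀ t ∈ Metric.ball x r ∩ Set.Icc 0 1,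
        |f s - f t| ≤ r ^ γ} with hEmdef
    have hEdecomp : E = ⋃ m, Em m := by
      apply Set.Subset.antisymm
      · intro x hx
        obtain ⟨r₀, hr₀pos, hr₀⟩ := step1 f x γ hγ0 (lt_of_lt_of_le hγh (hexp x hx))
        obtain ⟨m, hm⟩ := exists_nat_one_div_lt hr₀pos
        refine Set.mem_iUnion.mpr ⟨m, hx, fun r hr => hr₀ r ⟨hr.1, hr.2.trans hm⟩⟩
      · exact Set.iUnion_subset fun m x hx => hx.1
    have hsub : ∀ m, Em m ⊆ Set.Icc 0 1 := fun m x hx => hE hx.1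
    have hP : ∀ m, ∀ x ∈ Em m, ∀ r ∈ Set.Ioo (0:ℝ) (1/((m:ℝ)+1)),
        ∀ s ∈ Metric.ball x r ∩ Set.Icc 0 1, ∀ t ∈ Metric.ball x r ∩ Set.Icc 0 1,
          |f s - f t| ≤ r ^ γ := fun m x hx => hx.2
    have hr₀m : ∀ m : ℕ, (0:ℝ) < 1/((m:ℝ)+1) := fun m => by positivity
    have himg : g '' E = ⋃ m, g '' Em m := by rw [hEdecomp, Set.image_iUnion]
    constructor
    · rw [himg, dimH_iUnion]
      refine iSup_le fun m => ?_
      refine (lemA1 f (Em m) (hsub m) γ _ hγ0 hγ1 (hr₀m m) (hP m)).trans ?_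
      gcongr
      exact (fun x hx => hx.1)
    · rw [himg, dimH_iUnion]
      refine iSup_le fun m => ?_
      refine (lemA2 f (Em m) (hsub m) γ _ hγ0 hγ1 (hr₀m m) (hP m)).trans ?_
      gcongr
      exact (fun x hx => hx.1)
  -- real conversion
  have hdtop : dimH E ≠ ⊤ := by
    have h1 := dimH_mono (Set.subset_univ E)
    rw [Real.dimH_univ] at h1
    exact (h1.trans_lt (by norm_num)).ne
  have hGtop : dimH (g '' E) ≠ ⊤ := by
    have h1 := dimH_mono (Set.subset_univ (g '' E))
    rw [Real.dimH_univ_eq_finrank (ℝ × ℝ)] at h1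
    exact ne_top_of_le_ne_top (ENNReal.natCast_ne_top _) h1
  set gr : ℝ := (dimH (g '' E)).toReal with hgr
  set dr : ℝ := (dimH E).toReal with hdr
  have hgr0 : 0 ≤ gr := ENNReal.toReal_nonneg
  have hdr0 : 0 ≤ dr := ENNReal.toReal_nonneg
  have hkey1 : ∀ γ ∈ Set.Ioo (0:ℝ) h', gr * γ ≤ dr := by
    intro γ hγ
    have h1 := (hbound γ hγ).1
    have hne : dimH E / ENNReal.ofReal γ ≠ ⊤ := by
      intro heq
      rcases ENNReal.div_eq_top.mp heq with ⟨-, hb⟩ | ⟨ha, -⟩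
      · rw [ENNReal.ofReal_eq_zero] at hb
        linarith [hγ.1]
      · exact hdtop ha
    have h2 : gr ≤ dr / γ := by
      have h3 := ENNReal.toReal_mono hne h1
      rwa [ENNReal.toReal_div, ENNReal.toReal_ofReal hγ.1.le] at h3
    rwa [← le_div_iff₀ hγ.1]
  have hkey2 : ∀ γ ∈ Set.Ioo (0:ℝ) h', gr ≤ dr + (1 - γ) := by
    intro γ hγ
    have h1 := (hbound γ hγ).2
    have hne : dimH E + ENNReal.ofReal (1 - γ) ≠ ⊤ :=
      ENNReal.add_ne_top.mpr ⟨hdtop, ENNReal.ofReal_ne_top⟩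
    have h2 := ENNReal.toReal_mono hne h1
    rwa [ENNReal.toReal_add hdtop ENNReal.ofReal_ne_top,
      ENNReal.toReal_ofReal (by linarith [hγ.2.trans_le hh'le1])] at h2
  have hgh1 : gr * h' ≤ dr := by
    refine le_of_forall_pos_le_add fun η hη => ?_
    rcases eq_or_lt_of_le hgr0 with h0 | h0
    · rw [← h0, zero_mul]; linarith
    · set ε : ℝ := min (η / gr) (h' / 2) with hε
      have hεpos : 0 < ε := lt_min (by positivity) (by linarith)
      have hεh' : h' - ε ∈ Set.Ioo (0:ℝ) h' := by
        constructor
        · have : ε ≤ h'/2 := min_le_right _ _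
          linarith
        · linarith
      have h1 := hkey1 _ hεh'
      have h2 : gr * ε ≤ η := by
        have h3 : ε ≤ η / gr := min_le_left _ _
        calc gr * ε ≤ gr * (η / gr) := by nlinarith
          _ = η := by field_simp
      nlinarith
  have hgh2 : gr ≤ dr + 1 - h' := by
    refine le_of_forall_pos_le_add fun η hη => ?_
    set ε : ℝ := min η (h' / 2) with hε
    have hεpos : 0 < ε := lt_min hη (by linarith)
    have hεh' : h' - ε ∈ Set.Ioo (0:ℝ) h' := by
      constructor
      · have : ε ≤ h'/2 := min_le_right _ _
        linarith
      · linarith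
    have h1 := hkey2 _ hεh'
    have h2 : ε ≤ η := min_le_left _ _
    linarith
  -- conclude
  have hGeq : dimH (g '' E) = ENNReal.ofReal gr := (ENNReal.ofReal_toReal hGtop).symm
  have hdeq : dimH E = ENNReal.ofReal dr := (ENNReal.ofReal_toReal hdtop).symm
  rcases le_or_gt h 1 with hh1 | hh1
  · have hh'eq : h' = h := min_eq_left hh1
    refine le_trans ?_ (le_max_left _ _)
    refine le_min ?_ ?_
    · rw [hGeq, hdeq, ← ENNReal.ofReal_div_of_pos hpos]
      apply ENNReal.ofReal_le_ofReal
      rw [le_div_iff₀ hpos]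
      rw [hh'eq] at hgh1
      linarith
    · rw [hGeq, hdeq]
      have e1 : ENNReal.ofReal dr + 1 - ENNReal.ofReal h = ENNReal.ofReal (dr + 1 - h) := by
        rw [ENNReal.ofReal_sub _ hpos.le, ENNReal.ofReal_add hdr0 zero_le_one,
          ENNReal.ofReal_one]
      rw [e1]
      apply ENNReal.ofReal_le_ofReal
      rw [hh'eq] at hgh2
      linarith
  · have hh'eq : h' = 1 := min_eq_right hh1.le
    refine le_trans ?_ (le_max_right _ _)
    rw [hGeq, hdeq]
    apply ENNReal.ofReal_le_ofReal
    rw [hh'eq] at hgh1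
    linarith
end
end

section
/- Let f : [0,1] → ℝ and E ⊆ [0,1] be such that inf_{x∈E} h_f(x) = h for some h > 0. Then the Hausdorff dimension of the range of f over E satisfies dim_H {f(x) : x ∈ E} ≤ min( (dim_H E)/h , 1 ). -/
open MeasureTheory Filter Set

noncomputable section

open scoped NNReal ENNReal in
open MeasureTheory Filter Set in
/-- At a single scale `r`, the liminf bound on the log-oscillation ratio gives a
pointwise oscillation bound `|f s - f t| ≤ r ^ h'`. -/
lemma osc_step_aux (f : ℝ → ℝ) {x r h' : ℝ} (hx : x ∈ Set.Icc (0:ℝ) 1)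
    (hr0 : 0 < r) (hr1 : r < 1) (h'0 : 0 < h')
    (hb : h' ≤ Real.log (oscil f x r) / Real.log r) :
    ∀ s ∈ Metric.ball x r ∩ Set.Icc (0:ℝ) 1, ∀ t ∈ Metric.ball x r ∩ Set.Icc (0:ℝ) 1,
      |f s - f t| ≤ r ^ h' := by
  set T := ((fun p : ℝ × ℝ => |f p.1 - f p.2|) ''
    ((Metric.ball x r ∩ Set.Icc 0 1) ×ˢ (Metric.ball x r ∩ Set.Icc 0 1))) with hT
  have hos : oscil f x r = sSup T := rfl
  have hxmem : x ∈ Metric.ball x r ∩ Set.Icc (0:ℝ) 1 := ⟨Metric.mem_ball_self hr0, hx⟩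
  have h0T : (0:ℝ) ∈ T := ⟨(x, x), ⟨hxmem, hxmem⟩, by simp⟩
  have hlr : Real.log r < 0 := Real.log_neg hr0 hr1
  have hlog : Real.log (oscil f x r) ≤ h' * Real.log r := (le_div_iff_of_neg hlr).mp hb
  have hneg : Real.log (oscil f x r) < 0 :=
    hlog.trans_lt (mul_neg_of_pos_of_neg h'0 hlr)
  have hbdd : BddAbove T := by
    by_contra hB
    rw [hos, Real.sSup_of_not_bddAbove hB, Real.log_zero] at hneg
    exact lt_irrefl _ hneg
  have honn : (0:ℝ) ≤ oscil f x r := hos ▸ le_csSup hbdd h0T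
  have hopos : 0 < oscil f x r := by
    rcases honn.lt_or_eq with hlt | heq
    · exact hlt
    · rw [← heq, Real.log_zero] at hneg; exact absurd hneg (lt_irrefl 0)
  have hole : oscil f x r ≤ r ^ h' := by
    rw [show oscil f x r = Real.exp (Real.log (oscil f x r)) from (Real.exp_log hopos).symm,
      Real.rpow_def_of_pos hr0]
    exact Real.exp_le_exp.mpr (by linarith)
  intro s hs t ht
  exact le_trans (hos ▸ le_csSup hbdd ⟨(s, t), ⟨hs, ht⟩, rfl⟩) hole

open scoped NNReal ENNReal in
open MeasureTheory Filter Set in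
/-- Main covering/Hölder argument at exponent `h' > 0`. -/
lemma key_bound_aux (f : ℝ → ℝ) (E : Set ℝ) (hE : E ⊆ Set.Icc 0 1) (h' : ℝ) (h'0 : 0 < h')
    (hev : ∀ x ∈ E, ∀ᶠ r in nhdsWithin 0 (Set.Ioi 0),
      h' ≤ Real.log (oscil f x r) / Real.log r) :
    dimH (f '' E) ≤ dimH E / ENNReal.ofReal h' := by
  set A : ℕ → Set ℝ := fun n => {x : ℝ | ∀ r : ℝ, 0 < r → r < ((n:ℝ)+1)⁻¹ →
    ∀ s ∈ Metric.ball x r ∩ Set.Icc (0:ℝ) 1, ∀ t ∈ Metric.ball x r ∩ Set.Icc (0:ℝ) 1,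
      |f s - f t| ≤ r ^ h'} with hA
  have cover1 : ∀ x ∈ E, ∃ n : ℕ, x ∈ A n := by
    intro x hx
    obtain ⟨u, hu, hsub⟩ := mem_nhdsGT_iff_exists_Ioo_subset.mp (hev x hx)
    obtain ⟨n, hn⟩ := exists_nat_one_div_lt (show (0:ℝ) < u from hu)
    refine ⟨n, fun r hr0 hrn s hs t ht => ?_⟩
    have hn1 : (0:ℝ) < (n:ℝ) + 1 := by positivity
    have hru : r < u := lt_trans (by rwa [inv_eq_one_div] at hrn) hn
    have hr1 : r < 1 := lt_of_lt_of_le hrn (by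
      rw [inv_le_one_iff₀]; right; linarith [Nat.cast_nonneg (α := ℝ) n])
    exact osc_step_aux f (hE hx) hr0 hr1 h'0 (hsub ⟨hr0, hru⟩) s hs t ht
  set c : ℕ → ℝ := fun n => (4*((n:ℝ)+1))⁻¹ with hc
  have hcpos : ∀ n : ℕ, 0 < c n := fun n => by positivity
  set S : ℕ → ℕ → Set ℝ := fun n k => (E ∩ A n) ∩ Set.Icc ((k:ℝ) * c n) (((k:ℝ)+1) * c n)
    with hS
  have cover2 : E ⊆ ⋃ n, ⋃ k, S n k := by
    intro x hx
    obtain ⟨n, hn⟩ := cover1 x hx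
    have hx0 : (0:ℝ) ≤ x := (hE hx).1
    have hdiv : (0:ℝ) ≤ x / c n := div_nonneg hx0 (hcpos n).le
    refine Set.mem_iUnion.mpr ⟨n, Set.mem_iUnion.mpr ⟨⌊x / c n⌋₊, ⟨⟨hx, hn⟩, ?_, ?_⟩⟩⟩
    · rw [← le_div_iff₀ (hcpos n)]; exact Nat.floor_le hdiv
    · rw [← div_le_iff₀ (hcpos n)]; exact (Nat.lt_floor_add_one (x / c n)).le
  have holder : ∀ n k : ℕ, HolderOnWith (Real.toNNReal (2 ^ h')) (Real.toNNReal h') f (S n k) := by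
    intro n k x hx y hy
    rcases eq_or_ne x y with rfl | hxy
    · simp
    · have hd0 : 0 < |x - y| := abs_pos.mpr (sub_ne_zero.mpr hxy)
      have hdc : |x - y| ≤ c n := by
        have h1 := hx.2.1; have h2 := hx.2.2; have h3 := hy.2.1; have h4 := hy.2.2
        rw [abs_le]; constructor <;> nlinarith
      have hn1 : (0:ℝ) < (n:ℝ) + 1 := by positivity
      have hrn : 2 * |x - y| < ((n:ℝ)+1)⁻¹ := by
        have : 2 * c n < ((n:ℝ)+1)⁻¹ := by
          show (2:ℝ) * (4*((n:ℝ)+1))⁻¹ < ((n:ℝ)+1)⁻¹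
          rw [inv_eq_one_div, inv_eq_one_div, mul_one_div, div_lt_div_iff₀ (by positivity) hn1]
          nlinarith
        linarith
      have hr0 : 0 < 2 * |x - y| := by linarith
      have hxb : x ∈ Metric.ball x (2 * |x - y|) ∩ Set.Icc (0:ℝ) 1 :=
        ⟨Metric.mem_ball_self hr0, hE hx.1.1⟩
      have hyb : y ∈ Metric.ball x (2 * |x - y|) ∩ Set.Icc (0:ℝ) 1 := by
        refine ⟨?_, hE hy.1.1⟩
        rw [Metric.mem_ball, Real.dist_eq, abs_sub_comm]; linarith
      have hbound := hx.1.2 (2 * |x - y|) hr0 hrn x hxb y hyb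
      have hrw : (2 * |x - y|) ^ h' = 2 ^ h' * |x - y| ^ h' :=
        Real.mul_rpow (by norm_num) (abs_nonneg _)
      rw [edist_dist, edist_dist, Real.dist_eq, Real.dist_eq]
      calc ENNReal.ofReal |f x - f y| ≤ ENNReal.ofReal (2 ^ h' * |x - y| ^ h') := by
            apply ENNReal.ofReal_le_ofReal; rw [← hrw]; exact hbound
        _ = ENNReal.ofReal (2 ^ h') * ENNReal.ofReal (|x - y| ^ h') :=
            ENNReal.ofReal_mul (by positivity)
        _ = (Real.toNNReal (2 ^ h') : ℝ≥0∞) *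
              ENNReal.ofReal |x - y| ^ ((Real.toNNReal h' : ℝ≥0) : ℝ) := by
            rw [← ENNReal.ofReal_rpow_of_nonneg (abs_nonneg _) h'0.le,
              Real.coe_toNNReal _ h'0.le]
            rfl
  have hdim : ∀ n k : ℕ, dimH (f '' S n k) ≤ dimH E / ENNReal.ofReal h' := by
    intro n k
    have h1 : dimH (f '' S n k) ≤ dimH (S n k) / (Real.toNNReal h' : ℝ≥0∞) :=
      (holder n k).dimH_image_le (Real.toNNReal_pos.mpr h'0)
    have h2 : (Real.toNNReal h' : ℝ≥0∞) = ENNReal.ofReal h' := rfl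
    rw [h2] at h1
    exact h1.trans (ENNReal.div_le_div_right (dimH_mono (fun z hz => hz.1.1)) _)
  calc dimH (f '' E) ≤ dimH (⋃ n, ⋃ k, f '' S n k) := by
        refine dimH_mono (subset_trans (Set.image_mono cover2) ?_)
        rw [Set.image_iUnion]
        exact Set.iUnion_mono (fun n => (Set.image_iUnion).subset)
    _ = ⨆ n, ⨆ k, dimH (f '' S n k) := by
        rw [dimH_iUnion]; exact iSup_congr (fun n => dimH_iUnion _)
    _ ≤ dimH E / ENNReal.ofReal h' := iSup_le (fun n => iSup_le (fun k => hdim n k))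

theorem range_dimension_upper_bound
    (f : ℝ → ℝ) (E : Set ℝ) (hE : E ⊆ Set.Icc 0 1)
    (h : ℝ) (hpos : 0 < h) (hinf : sInf (holderExp f '' E) = h) :
    dimH (f '' E) ≤ min (dimH E / ENNReal.ofReal h) 1 := by
  have hone : dimH (f '' E) ≤ 1 := by
    calc dimH (f '' E) ≤ dimH (Set.univ : Set ℝ) := dimH_mono (Set.subset_univ _)
      _ = 1 := Real.dimH_univ
  refine le_min ?_ hone
  -- every point of E has Hölder exponent at least h
  have hbddB : BddBelow (holderExp f '' E) := by
    by_contra hB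
    rw [Real.sInf_of_not_bddBelow hB] at hinf; linarith
  have hge : ∀ x ∈ E, h ≤ holderExp f x := by
    intro x hx
    rw [← hinf]
    exact csInf_le hbddB (Set.mem_image_of_mem _ hx)
  -- eventual log-oscillation bound for each exponent h' < h
  have hev : ∀ h' : ℝ, 0 < h' → h' < h → ∀ x ∈ E,
      ∀ᶠ r in nhdsWithin 0 (Set.Ioi 0), h' ≤ Real.log (oscil f x r) / Real.log r := by
    intro h' h'0 hh' x hx
    have hL : h' < holderExp f x := lt_of_lt_of_le hh' (hge x hx)
    set S : Set ℝ := {a : ℝ | ∀ᶠ r in nhdsWithin 0 (Set.Ioi 0),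
      a ≤ Real.log (oscil f x r) / Real.log r} with hSdef
    have hSs : holderExp f x = sSup S := liminf_eq
    have hSne : S.Nonempty := by
      by_contra hc
      rw [Set.not_nonempty_iff_eq_empty] at hc
      rw [hSs, hc, Real.sSup_empty] at hL
      linarith
    obtain ⟨a, haS, hha⟩ := exists_lt_of_lt_csSup hSne (hSs ▸ hL)
    have haS' : ∀ᶠ r in nhdsWithin 0 (Set.Ioi 0),
        a ≤ Real.log (oscil f x r) / Real.log r := haS
    exact haS'.mono (fun r hr => le_trans hha.le hr)
  have key : ∀ h' : ℝ, 0 < h' → h' < h → dimH (f '' E) ≤ dimH E / ENNReal.ofReal h' :=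
    fun h' h0 hh => key_bound_aux f E hE h' h0 (hev h' h0 hh)
  have hmul : ∀ h' : ℝ, 0 < h' → h' < h → dimH (f '' E) * ENNReal.ofReal h' ≤ dimH E := by
    intro h' h0 hh
    rw [← ENNReal.le_div_iff_mul_le
      (Or.inl ((ENNReal.ofReal_pos.mpr h0).ne')) (Or.inl ENNReal.ofReal_ne_top)]
    exact key h' h0 hh
  -- pass to the limit h' → h
  have hseqr : Tendsto (fun n : ℕ => h - h / ((n:ℝ) + 2)) atTop (nhds h) := by
    have h2 : Tendsto (fun n : ℕ => h / ((n:ℝ) + 2)) atTop (nhds 0) := by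
      apply Tendsto.div_atTop (tendsto_const_nhds (x := h))
      exact tendsto_atTop_add_const_right atTop 2 tendsto_natCast_atTop_atTop
    simpa using (tendsto_const_nhds (x := h)).sub h2
  have hseq : Tendsto (fun n : ℕ => ENNReal.ofReal (h - h / ((n:ℝ) + 2))) atTop
      (nhds (ENNReal.ofReal h)) := (ENNReal.continuous_ofReal.tendsto h).comp hseqr
  have hmt : Tendsto (fun n : ℕ => dimH (f '' E) * ENNReal.ofReal (h - h / ((n:ℝ) + 2)))
      atTop (nhds (dimH (f '' E) * ENNReal.ofReal h)) :=
    ENNReal.Tendsto.const_mul hseq (Or.inl (ENNReal.ofReal_pos.mpr hpos).ne')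
  have hfin : dimH (f '' E) * ENNReal.ofReal h ≤ dimH E := by
    refine le_of_tendsto hmt (Filter.Eventually.of_forall (fun n => ?_))
    have hn2 : (0:ℝ) < (n:ℝ) + 2 := by positivity
    have h1 : 0 < h - h / ((n:ℝ) + 2) := by
      rw [sub_pos, div_lt_iff₀ hn2]; nlinarith
    have h2 : h - h / ((n:ℝ) + 2) < h := by
      have : 0 < h / ((n:ℝ) + 2) := by positivity
      linarith
    exact hmul _ h1 h2
  rw [ENNReal.le_div_iff_mul_le
    (Or.inl ((ENNReal.ofReal_pos.mpr hpos).ne')) (Or.inl ENNReal.ofReal_ne_top)]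
  exact hfin
end
end

section
/- Let X ⊆ Σ be nonempty, φ : Σ → ℝ, q ∈ ℝ, and suppose μ is a probability measure with μ(X) = 1 which is C₁-Gibbs on X for φ with pressure P₁, and ν is a probability measure with ν(X) = 1 which is C₂-Gibbs on X for qφ with pressure P₂. Then the limit lim_{n→∞} −(1/n) log₂ Σ_{w ∈ {0,1}^n : μ([w]) ≠ 0} μ([w])^q exists and equals (qP₁ − P₂)/log 2. -/
open MeasureTheory Filter Set

noncomputable section

open scoped Classical in
noncomputable def powSum (μ : Measure Sig) (n : ℕ) (q : ℝ) : ℝ :=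
  ∑ w : Fin n → Bool, if μ (cylF w) ≠ 0 then (μ (cylF w)).toReal ^ q else 0

lemma gibbs_aux_rpow {C x y : ℝ} (hC : 1 ≤ C) (hy : 0 < y)
    (h1 : C⁻¹ * y ≤ x) (h2 : x ≤ C * y) (q : ℝ) :
    C ^ (-|q|) * y ^ q ≤ x ^ q ∧ x ^ q ≤ C ^ |q| * y ^ q := by
  have hC0 : (0:ℝ) < C := lt_of_lt_of_le one_pos hC
  have hx : 0 < x := lt_of_lt_of_le (by positivity) h1
  have hCiy : (0:ℝ) < C⁻¹ * y := by positivity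
  rcases le_or_gt 0 q with hq | hq
  · rw [abs_of_nonneg hq]
    constructor
    · calc C ^ (-q) * y ^ q = (C⁻¹ * y) ^ q := by
            rw [Real.mul_rpow (by positivity) hy.le, Real.rpow_neg hC0.le,
              Real.inv_rpow hC0.le]
        _ ≤ x ^ q := Real.rpow_le_rpow hCiy.le h1 hq
    · calc x ^ q ≤ (C * y) ^ q := Real.rpow_le_rpow hx.le h2 hq
        _ = C ^ q * y ^ q := Real.mul_rpow hC0.le hy.le
  · rw [abs_of_neg hq, neg_neg]
    constructor
    · calc C ^ q * y ^ q = (C * y) ^ q := (Real.mul_rpow hC0.le hy.le).symm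
        _ ≤ x ^ q := Real.rpow_le_rpow_of_nonpos hx h2 hq.le
    · calc x ^ q ≤ (C⁻¹ * y) ^ q := Real.rpow_le_rpow_of_nonpos hCiy h1 hq.le
        _ = C ^ (-q) * y ^ q := by
            rw [Real.mul_rpow (by positivity) hy.le, Real.rpow_neg hC0.le,
              Real.inv_rpow hC0.le]

lemma cylF_eq_cylN {n : ℕ} {w : Fin n → Bool} {t : Sig} (ht : t ∈ cylF w) :
    cylF w = cylN t n := by
  ext s
  constructor
  · intro hs i hi
    rw [hs ⟨i, hi⟩, ht ⟨i, hi⟩]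
  · intro hs i
    rw [hs i i.isLt, ht i]

lemma measurableSet_cylF {n : ℕ} (w : Fin n → Bool) : MeasurableSet (cylF w) := by
  have : cylF w = ⋂ i : Fin n, (fun t : Sig => t (i : ℕ)) ⁻¹' {w i} := by
    ext t; simp [cylF]
  rw [this]
  exact MeasurableSet.iInter fun i =>
    (measurable_pi_apply _) (measurableSet_singleton _)

lemma cylF_eq_preimage {n : ℕ} (w : Fin n → Bool) :
    cylF w = (fun t : Sig => (fun i : Fin n => t i)) ⁻¹' {w} := by
  ext t; simp [cylF, funext_iff]

lemma sum_measure_cylF (m : Measure Sig) [IsProbabilityMeasure m] (n : ℕ) :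
    ∑ w : Fin n → Bool, m (cylF w) = 1 := by
  calc ∑ w : Fin n → Bool, m (cylF w)
      = ∑ w : Fin n → Bool, m ((fun t : Sig => (fun i : Fin n => t i)) ⁻¹' {w}) := by
        simp_rw [← cylF_eq_preimage]
    _ = m ((fun t : Sig => (fun i : Fin n => t i)) ⁻¹' ↑(Finset.univ : Finset (Fin n → Bool))) :=
        sum_measure_preimage_singleton _ (fun y _ => by
          rw [← cylF_eq_preimage]; exact measurableSet_cylF y)
    _ = 1 := by simp

lemma measure_cylF_zero {m : Measure Sig} [IsProbabilityMeasure m] {X : Set Sig}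
    (hX : m X = 1) {n : ℕ} {w : Fin n → Bool} (h : cylF w ∩ X = ∅) :
    m (cylF w) = 0 := by
  have hsub : X ⊆ (cylF w)ᶜ := by
    intro t ht htc
    exact absurd (Set.mem_inter htc ht) (by rw [h]; exact Set.notMem_empty t)
  have h1 : (1 : ENNReal) ≤ m (cylF w)ᶜ := hX ▸ measure_mono hsub
  have h2 : m (cylF w)ᶜ = 1 - m (cylF w) := prob_compl_eq_one_sub (measurableSet_cylF w)
  have h3 : m (cylF w) ≤ 1 := prob_le_one
  have h4 := ENNReal.sub_sub_cancel ENNReal.one_ne_top h3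
  rw [h2] at h1
  rw [← h4, le_antisymm tsub_le_self h1, tsub_self]

theorem renyi_entropy_of_gibbs
    (X : Set Sig) (hXne : X.Nonempty) (φ : Sig → ℝ) (q : ℝ)
    (C₁ C₂ P₁ P₂ : ℝ) (hC₁ : 1 ≤ C₁) (hC₂ : 1 ≤ C₂)
    (μ ν : Measure Sig) [IsProbabilityMeasure μ] [IsProbabilityMeasure ν]
    (hμX : μ X = 1) (hνX : ν X = 1)
    (hμ : GibbsOn X φ C₁ P₁ μ)
    (hν : GibbsOn X (fun t => q * φ t) C₂ P₂ ν) :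
    Tendsto (fun n : ℕ => -(1 / (n:ℝ)) * Real.logb 2 (powSum μ n q)) atTop
      (nhds ((q * P₁ - P₂) / Real.log 2)) := by
  classical
  have hlog2 : (0:ℝ) < Real.log 2 := Real.log_pos one_lt_two
  set Δ : ℝ := P₂ - q * P₁ with hΔ
  set K : ℝ := C₁ ^ |q| * C₂ with hK
  have hC₁0 : (0:ℝ) < C₁ := lt_of_lt_of_le one_pos hC₁
  have hC₂0 : (0:ℝ) < C₂ := lt_of_lt_of_le one_pos hC₂
  have hCq1 : (1:ℝ) ≤ C₁ ^ |q| := Real.one_le_rpow hC₁ (abs_nonneg q)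
  have hK1 : (1:ℝ) ≤ K := by nlinarith
  have hK0 : (0:ℝ) < K := lt_of_lt_of_le one_pos hK1
  have hKinv : K⁻¹ = C₁ ^ (-|q|) * C₂⁻¹ := by
    rw [hK, mul_inv, Real.rpow_neg hC₁0.le]
  -- the key uniform bounds on powSum
  have key : ∀ n : ℕ, K⁻¹ * Real.exp (n * Δ) ≤ powSum μ n q ∧
      powSum μ n q ≤ K * Real.exp (n * Δ) := by
    intro n
    set F : ℝ := Real.exp (n * Δ) with hF
    have hF0 : (0:ℝ) < F := Real.exp_pos _
    have hterm : ∀ w : Fin n → Bool,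
        (C₁ ^ (-|q|) * C₂⁻¹ * F) * (ν (cylF w)).toReal ≤
          (if μ (cylF w) ≠ 0 then (μ (cylF w)).toReal ^ q else 0) ∧
        (if μ (cylF w) ≠ 0 then (μ (cylF w)).toReal ^ q else 0) ≤
          (C₁ ^ |q| * C₂ * F) * (ν (cylF w)).toReal := by
      intro w
      rcases (cylF w ∩ X).eq_empty_or_nonempty with hemp | ⟨t, htw, htX⟩
      · have hμ0 : μ (cylF w) = 0 := measure_cylF_zero hμX hemp
        have hν0 : ν (cylF w) = 0 := measure_cylF_zero hνX hemp
        simp [hμ0, hν0]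
      · have hcyl : cylF w = cylN t n := cylF_eq_cylN htw
        have htc : t ∈ cylN t n := fun i _ => rfl
        obtain ⟨hμl, hμu⟩ := hμ t htX n t htc
        obtain ⟨hνl, hνu⟩ := hν t htX n t htc
        rw [← hcyl] at hμl hμu hνl hνu
        set μr : ℝ := (μ (cylF w)).toReal with hμr
        set νr : ℝ := (ν (cylF w)).toReal with hνr
        set B : ℝ := birkhoff φ n t - n * P₁ with hB
        set G : ℝ := Real.exp (birkhoff (fun s => q * φ s) n t - n * P₂) with hG
        have hG0 : (0:ℝ) < G := Real.exp_pos _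
        have hbq : birkhoff (fun s => q * φ s) n t = q * birkhoff φ n t := by
          simp [birkhoff, Finset.mul_sum]
        have hqB : birkhoff (fun s => q * φ s) n t - n * P₂ = B * q - n * Δ := by
          rw [hbq, hB, hΔ]; ring
        have hb := gibbs_aux_rpow hC₁ (Real.exp_pos B) hμl hμu q
        rw [← Real.exp_mul] at hb
        have hE : G * F = Real.exp (B * q) := by
          rw [hG, hF, ← Real.exp_add, hqB]
          congr 1; ring
        have hμrpos : 0 < μr := lt_of_lt_of_le (by positivity) hμl
        have hνrpos : 0 ≤ νr := ENNReal.toReal_nonneg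
        have hne : μ (cylF w) ≠ 0 := by
          intro h0
          rw [hμr, h0] at hμrpos
          simp at hμrpos
        rw [if_pos hne]
        constructor
        · calc (C₁ ^ (-|q|) * C₂⁻¹ * F) * νr
              ≤ (C₁ ^ (-|q|) * C₂⁻¹ * F) * (C₂ * G) := by
                exact mul_le_mul_of_nonneg_left hνu (by positivity)
            _ = C₁ ^ (-|q|) * Real.exp (B * q) := by
                rw [← hE]; field_simp
            _ ≤ μr ^ q := hb.1
        · have hGν : G ≤ C₂ * νr := by
            have h' := mul_le_mul_of_nonneg_left hνl hC₂0.le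
            calc G = C₂ * (C₂⁻¹ * G) := by field_simp
              _ ≤ C₂ * νr := h'
          calc μr ^ q ≤ C₁ ^ |q| * Real.exp (B * q) := hb.2
            _ = C₁ ^ |q| * (G * F) := by rw [hE]
            _ ≤ C₁ ^ |q| * ((C₂ * νr) * F) := by
                apply mul_le_mul_of_nonneg_left
                  (mul_le_mul_of_nonneg_right hGν hF0.le) (by positivity)
            _ = (C₁ ^ |q| * C₂ * F) * νr := by ring
    have hν1 : ∑ w : Fin n → Bool, (ν (cylF w)).toReal = 1 := by
      rw [← ENNReal.toReal_sum (fun a _ => measure_ne_top ν _), sum_measure_cylF]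
      simp
    constructor
    · calc K⁻¹ * F = ∑ w : Fin n → Bool, (C₁ ^ (-|q|) * C₂⁻¹ * F) * (ν (cylF w)).toReal := by
            rw [← Finset.mul_sum, hν1, mul_one, hKinv]
        _ ≤ powSum μ n q := Finset.sum_le_sum fun w _ => (hterm w).1
    · calc powSum μ n q
          ≤ ∑ w : Fin n → Bool, (C₁ ^ |q| * C₂ * F) * (ν (cylF w)).toReal :=
            Finset.sum_le_sum fun w _ => (hterm w).2
        _ = K * F := by rw [← Finset.mul_sum, hν1, mul_one, hK]
  -- squeeze
  have hg : Tendsto (fun n : ℕ => -(Real.logb 2 K) / n + (q * P₁ - P₂) / Real.log 2)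
      atTop (nhds ((q * P₁ - P₂) / Real.log 2)) := by
    have := (tendsto_const_div_atTop_nhds_zero_nat (-(Real.logb 2 K))).add
      (tendsto_const_nhds (x := (q * P₁ - P₂) / Real.log 2))
    simpa using this
  have hh : Tendsto (fun n : ℕ => (Real.logb 2 K) / n + (q * P₁ - P₂) / Real.log 2)
      atTop (nhds ((q * P₁ - P₂) / Real.log 2)) := by
    have := (tendsto_const_div_atTop_nhds_zero_nat (Real.logb 2 K)).add
      (tendsto_const_nhds (x := (q * P₁ - P₂) / Real.log 2))
    simpa using this
  apply tendsto_of_tendsto_of_tendsto_of_le_of_le' hg hh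
  · filter_upwards [eventually_ge_atTop 1] with n hn
    have hn0 : (0:ℝ) < n := by exact_mod_cast hn
    obtain ⟨hl, hu⟩ := key n
    have hP0 : 0 < powSum μ n q := lt_of_lt_of_le (by positivity) hl
    have hlogu : Real.logb 2 (powSum μ n q) ≤ Real.logb 2 K + (n * Δ) / Real.log 2 := by
      have h' := Real.logb_le_logb_of_le (b := 2) one_lt_two hP0 hu
      have heq : Real.logb 2 (K * Real.exp (n * Δ))
          = Real.logb 2 K + (n * Δ) / Real.log 2 := by
        simp [Real.logb, Real.log_mul (ne_of_gt hK0) (Real.exp_ne_zero _),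
          Real.log_exp, add_div]
      rwa [heq] at h'
    have h2 : -(1/(n:ℝ)) * (Real.logb 2 K + (n * Δ) / Real.log 2)
        ≤ -(1/(n:ℝ)) * Real.logb 2 (powSum μ n q) :=
      mul_le_mul_of_nonpos_left hlogu (by
        have : (0:ℝ) < 1 / n := by positivity
        linarith)
    have h3 : -(1/(n:ℝ)) * (Real.logb 2 K + (n * Δ) / Real.log 2)
        = -(Real.logb 2 K) / n + (q * P₁ - P₂) / Real.log 2 := by
      rw [hΔ]; field_simp; ring
    linarith
  · filter_upwards [eventually_ge_atTop 1] with n hn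
    have hn0 : (0:ℝ) < n := by exact_mod_cast hn
    obtain ⟨hl, hu⟩ := key n
    have hKi0 : (0:ℝ) < K⁻¹ * Real.exp (n * Δ) := by positivity
    have hP0 : 0 < powSum μ n q := lt_of_lt_of_le hKi0 hl
    have hlogl : Real.logb 2 K⁻¹ + (n * Δ) / Real.log 2 ≤ Real.logb 2 (powSum μ n q) := by
      have h' := Real.logb_le_logb_of_le (b := 2) one_lt_two hKi0 hl
      have heq : Real.logb 2 (K⁻¹ * Real.exp (n * Δ))
          = Real.logb 2 K⁻¹ + (n * Δ) / Real.log 2 := by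
        simp [Real.logb, Real.log_mul (by positivity : K⁻¹ ≠ 0) (Real.exp_ne_zero _),
          Real.log_exp, add_div]
      rwa [heq] at h'
    have h2 : -(1/(n:ℝ)) * Real.logb 2 (powSum μ n q)
        ≤ -(1/(n:ℝ)) * (Real.logb 2 K⁻¹ + (n * Δ) / Real.log 2) :=
      mul_le_mul_of_nonpos_left hlogl (by
        have : (0:ℝ) < 1 / n := by positivity
        linarith)
    have h3 : -(1/(n:ℝ)) * (Real.logb 2 K⁻¹ + (n * Δ) / Real.log 2)
        = (Real.logb 2 K) / n + (q * P₁ - P₂) / Real.log 2 := by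
      rw [hΔ, Real.logb, Real.logb, Real.log_inv]; field_simp; ring
    linarith
end
end

section
/- Let k ≥ 2 and let F ⊆ {0,1}^k be a set of forbidden words such that for every w ∈ F, the word w* defined by w*_i = w_i for 1 ≤ i ≤ k−1 and w*_k = 1 − w_k does not belong to F. Let X = { t ∈ Σ : for all m ≥ 0, (t_{m+1}, …, t_{m+k}) ∉ F }. Then X is nonempty; moreover for every word u ∈ {0,1}^{k−1} there exists t ∈ X whose first k−1 letters equal u, and consequently the Hausdorff distance (with respect to ρ) between X and Σ is at most 2^{-(k−1)}. -/
open MeasureTheory Filter Set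

noncomputable section

open Classical in
noncomputable def buildT (k : ℕ) (F : Set (Fin k → Bool)) (u : Fin (k-1) → Bool) : ℕ → Bool
  | n =>
    if h : n < k - 1 then u ⟨n, h⟩
    else if (fun i : Fin k =>
        if hi : (i : ℕ) < k - 1 then buildT k F u (n - (k-1) + i) else false) ∈ F
      then true else false
  termination_by n => n
  decreasing_by all_goals omega

lemma rho_nonneg (s t : Sig) : 0 ≤ rho s t := by
  apply Real.sInf_nonneg
  rintro r ⟨n, rfl, -⟩
  positivity

lemma rho_le (s t : Sig) (n : ℕ) (h : ∀ i < n, s i = t i) : rho s t ≤ (2:ℝ) ^ (-(n:ℤ)) := by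
  apply csInf_le
  · exact ⟨0, by rintro r ⟨m, rfl, -⟩; positivity⟩
  · exact ⟨n, rfl, h⟩

lemma buildT_prefix (k : ℕ) (F : Set (Fin k → Bool)) (u : Fin (k-1) → Bool)
    (i : Fin (k-1)) : buildT k F u i = u i := by
  rw [buildT, dif_pos i.isLt]

lemma buildT_spec (k : ℕ) (hk : 2 ≤ k) (F : Set (Fin k → Bool))
    (hF : ∀ w ∈ F, (fun i : Fin k => if (i : ℕ) = k - 1 then !(w i) else w i) ∉ F)
    (u : Fin (k-1) → Bool) :
    ∀ m : ℕ, (fun i : Fin k => buildT k F u (m + i)) ∉ F := by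
  classical
  intro m
  set t := buildT k F u with ht
  set n := m + (k - 1) with hn
  have hnk : ¬ n < k - 1 := by omega
  have hm : n - (k - 1) = m := by omega
  set g : Bool → Fin k → Bool := fun b i => if (i:ℕ) < k - 1 then t (m + i) else b with hg
  have htn : t n = if g false ∈ F then true else false := by
    rw [ht, buildT, dif_neg hnk]
    have : (fun i : Fin k =>
        if hi : (i : ℕ) < k - 1 then buildT k F u (n - (k-1) + i) else false) = g false := by
      funext i
      by_cases hi : (i:ℕ) < k - 1 <;> simp [hg, hi, hm, ← ht]
    rw [this]
  have hwin : (fun i : Fin k => t (m + i)) = g (t n) := by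
    funext i
    by_cases hi : (i:ℕ) < k - 1
    · simp [hg, hi]
    · have h2 := i.isLt
      have hik : m + (i:ℕ) = n := by omega
      simp [hg, hi, hik]
  by_cases hgf : g false ∈ F
  · have htrue : t n = true := by rw [htn, if_pos hgf]
    rw [hwin, htrue]
    have hflip := hF _ hgf
    have hgt : (fun i : Fin k => if (i:ℕ) = k - 1 then !(g false i) else g false i) = g true := by
      funext i
      by_cases hik : (i:ℕ) = k - 1
      · have h3 : ¬ (i:ℕ) < k - 1 := by omega
        simp [hg, hik, h3]
      · have h2 := i.isLt
        have h3 : (i:ℕ) < k - 1 := by omega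
        simp [hg, hik, h3]
    rwa [hgt] at hflip
  · have hfalse : t n = false := by rw [htn, if_neg hgf]
    rw [hwin, hfalse]
    exact hgf

theorem subshift_avoiding_forbidden_words_nonempty
    (k : ℕ) (hk : 2 ≤ k) (F : Set (Fin k → Bool))
    (hF : ∀ w ∈ F, (fun i : Fin k => if (i : ℕ) = k - 1 then !(w i) else w i) ∉ F) :
    {t : Sig | ∀ m : ℕ, (fun i : Fin k => t (m + i)) ∉ F}.Nonempty ∧
    (∀ u : Fin (k-1) → Bool,
      ∃ t ∈ {t : Sig | ∀ m : ℕ, (fun i : Fin k => t (m + i)) ∉ F},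
        ∀ i : Fin (k-1), t i = u i) ∧
    distH {t : Sig | ∀ m : ℕ, (fun i : Fin k => t (m + i)) ∉ F} Set.univ
      ≤ (2:ℝ) ^ (-((k:ℤ) - 1)) := by
  set X := {t : Sig | ∀ m : ℕ, (fun i : Fin k => t (m + i)) ∉ F} with hX
  have key : ∀ u : Fin (k-1) → Bool, ∃ t ∈ X, ∀ i : Fin (k-1), t i = u i := by
    intro u
    refine ⟨buildT k F u, fun m => buildT_spec k hk F hF u m, fun i => buildT_prefix k F u i⟩
  have hcast : ((k-1:ℕ):ℤ) = (k:ℤ) - 1 := by omega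
  have hB : (0:ℝ) ≤ (2:ℝ) ^ (-((k:ℤ) - 1)) := by positivity
  obtain ⟨t0, ht0, -⟩ := key (fun _ => false)
  refine ⟨⟨t0, ht0⟩, key, ?_⟩
  rw [distH]
  apply max_le
  · apply Real.iSup_le _ hB
    intro a
    apply Real.iSup_le _ hB
    intro _
    have bdd : BddBelow (Set.range fun b => ⨅ _ : b ∈ (Set.univ : Set Sig), rho a b) := by
      refine ⟨0, ?_⟩
      rintro x ⟨b, rfl⟩
      exact Real.iInf_nonneg fun _ => rho_nonneg a b
    calc (⨅ b, ⨅ _ : b ∈ (Set.univ : Set Sig), rho a b)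
        ≤ ⨅ _ : a ∈ (Set.univ : Set Sig), rho a a := ciInf_le bdd a
      _ = rho a a := ciInf_pos (Set.mem_univ a)
      _ ≤ (2:ℝ) ^ (-((k:ℤ) - 1)) := by
          rw [← hcast]; exact rho_le a a (k-1) fun i _ => rfl
  · apply Real.iSup_le _ hB
    intro b
    apply Real.iSup_le _ hB
    intro _
    obtain ⟨t, htX, htu⟩ := key (fun i => b i)
    have bdd : BddBelow (Set.range fun a => ⨅ _ : a ∈ X, rho a b) := by
      refine ⟨0, ?_⟩
      rintro x ⟨a, rfl⟩
      exact Real.iInf_nonneg fun _ => rho_nonneg a b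
    calc (⨅ a, ⨅ _ : a ∈ X, rho a b)
        ≤ ⨅ _ : t ∈ X, rho t b := ciInf_le bdd t
      _ = rho t b := ciInf_pos htX
      _ ≤ (2:ℝ) ^ (-((k:ℤ) - 1)) := by
          rw [← hcast]; exact rho_le t b (k-1) fun i hi => htu ⟨i, hi⟩
end
end

section
/- Let s, t ∈ Σ with λ(s) ≠ λ(t). Then there exists a unique p ≥ 1 such that (s|_{p+1}, t|_{p+1}) ∈ 𝒫_p. Moreover, for this p, every s' ∈ [s|_{p+1}] and t' ∈ [t|_{p+1}] satisfy 2^{-p-1} ≤ |λ(s') − λ(t')| ≤ 2^{-p+1}. -/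
open MeasureTheory Filter Set

noncomputable section

lemma two_zpow_neg_nat (n : ℕ) : (2:ℝ)^(-(n:ℤ)) = (2⁻¹)^n := by
  rw [zpow_neg, zpow_natCast, inv_pow]

lemma base_eq (i : ℕ) : (2:ℝ)^(-(i:ℤ)-1) = 2⁻¹ * (2⁻¹)^i := by
  rw [show -(i:ℤ)-1 = -((i:ℤ)) + (-1) by ring, zpow_add₀ (two_ne_zero), two_zpow_neg_nat]
  norm_num; ring

lemma summable_base : Summable (fun i : ℕ => (2:ℝ) ^ (-(i:ℤ) - 1)) := by
  simp only [base_eq]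
  exact (summable_geometric_of_lt_one (by norm_num) (by norm_num)).mul_left _

lemma tsum_base : ∑' i : ℕ, (2:ℝ) ^ (-(i:ℤ) - 1) = 1 := by
  simp only [base_eq]
  rw [tsum_mul_left, tsum_geometric_of_lt_one (by norm_num) (by norm_num)]
  norm_num

lemma summable_lam (t : Sig) :
    Summable (fun i : ℕ => if t i then (2:ℝ)^(-(i:ℤ)-1) else 0) := by
  refine Summable.of_nonneg_of_le (fun i => ?_) (fun i => ?_) summable_base <;>
    split <;> first | exact le_rfl | positivity

lemma lamF_takeInf (t : Sig) (n : ℕ) :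
    lamF (takeInf t n) = ∑ i ∈ Finset.range n, (if t i then (2:ℝ)^(-(i:ℤ)-1) else 0) := by
  simp only [lamF, takeInf]
  exact Fin.sum_univ_eq_sum_range (fun i => if t i then (2:ℝ)^(-(i:ℤ)-1) else 0) n

lemma tail_bounds (t : Sig) (n : ℕ) :
    lamF (takeInf t n) ≤ lamInf t ∧ lamInf t ≤ lamF (takeInf t n) + (2:ℝ)^(-(n:ℤ)) := by
  have hdec := (summable_lam t).sum_add_tsum_nat_add n
  have hb : ∀ i : ℕ, (if t (i + n) then (2:ℝ)^(-((i+n:ℕ):ℤ)-1) else 0) ≤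
      (2:ℝ)^(-(n:ℤ)) * (2:ℝ)^(-(i:ℤ)-1) := by
    intro i
    have he : (2:ℝ)^(-((i+n:ℕ):ℤ)-1) = (2:ℝ)^(-(n:ℤ)) * (2:ℝ)^(-(i:ℤ)-1) := by
      rw [← zpow_add₀ (two_ne_zero : (2:ℝ) ≠ 0)]
      congr 1; push_cast; ring
    rw [he]; split
    · exact le_rfl
    · positivity
  have hnn : ∀ i : ℕ, 0 ≤ (if t (i + n) then (2:ℝ)^(-((i+n:ℕ):ℤ)-1) else 0) := by
    intro i; split <;> positivity
  have hsum : Summable (fun i : ℕ => if t (i + n) then (2:ℝ)^(-((i+n:ℕ):ℤ)-1) else 0) :=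
    Summable.of_nonneg_of_le hnn hb (summable_base.mul_left _)
  have htail0 : 0 ≤ ∑' i : ℕ, (if t (i + n) then (2:ℝ)^(-((i+n:ℕ):ℤ)-1) else 0) :=
    tsum_nonneg hnn
  have htailb : (∑' i : ℕ, (if t (i + n) then (2:ℝ)^(-((i+n:ℕ):ℤ)-1) else 0)) ≤ (2:ℝ)^(-(n:ℤ)) := by
    calc _ ≤ ∑' i : ℕ, (2:ℝ)^(-(n:ℤ)) * (2:ℝ)^(-(i:ℤ)-1) :=
          Summable.tsum_le_tsum hb hsum (summable_base.mul_left _)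
      _ = (2:ℝ)^(-(n:ℤ)) := by rw [tsum_mul_left, tsum_base, mul_one]
  rw [lamF_takeInf]
  unfold lamInf
  constructor <;> linarith [hdec, htail0, htailb]

lemma two_zpow_pos (z : ℤ) : (0:ℝ) < 2 ^ z := by positivity

lemma lamF_dyadic {n : ℕ} (w : Fin n → Bool) :
    ∃ k : ℤ, lamF w = (k:ℝ) * (2:ℝ)^(-(n:ℤ)) := by
  refine ⟨∑ i : Fin n, if w i then 2^(n-1-(i:ℕ)) else 0, ?_⟩
  rw [lamF]
  push_cast
  rw [Finset.sum_mul]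
  refine Finset.sum_congr rfl fun i _ => ?_
  rcases Bool.eq_false_or_eq_true (w i) with h | h <;> simp [h]
  have hi := i.isLt
  rw [← zpow_natCast (2:ℝ) n, ← zpow_neg, ← zpow_natCast (2:ℝ) (n-1-(i:ℕ)),
    ← zpow_add₀ (two_ne_zero : (2:ℝ) ≠ 0)]
  congr 1
  omega

lemma lamF_succ (u : Sig) (n : ℕ) :
    lamF (takeInf u (n+1)) = lamF (takeInf u n) + (if u n then (2:ℝ)^(-(n:ℤ)-1) else 0) := by
  rw [lamF_takeInf, lamF_takeInf, Finset.sum_range_succ]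

lemma takeF_takeInf (u : Sig) (p : ℕ) : takeF (takeInf u (p+1)) p = takeInf u p := by
  funext i
  have h : (i:ℕ) < p+1 := Nat.lt_succ_of_lt i.isLt
  simp [takeF, takeInf, h]

lemma diff_close (u v : Sig) (n : ℕ) :
    |(lamInf u - lamInf v) - (lamF (takeInf u n) - lamF (takeInf v n))| ≤ (2:ℝ)^(-(n:ℤ)) := by
  have h1 := tail_bounds u n
  have h2 := tail_bounds v n
  rw [abs_le]
  constructor <;> linarith [h1.1, h1.2, h2.1, h2.2]

lemma lamF_one (u : Sig) : lamF (takeInf u 1) = if u 0 then (2:ℝ)^(-1:ℤ) else 0 := by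
  rw [lamF_takeInf, Finset.sum_range_one]
  norm_num

lemma two_zpow_sub_one (n : ℤ) : (2:ℝ)^(n-1) * 2 = 2^n := by
  rw [← zpow_add_one₀ (two_ne_zero : (2:ℝ) ≠ 0)]; congr 1; ring

lemma zpow_succ_cast (n : ℕ) : (2:ℝ)^(-((n+1:ℕ):ℤ)) = 2^(-(n:ℤ)-1) := by
  congr 1; push_cast; ring

theorem unique_separation_scale
    (s t : Sig) (hst : lamInf s ≠ lamInf t) :
    (∃! p : ℕ, 1 ≤ p ∧ (takeInf s (p+1), takeInf t (p+1)) ∈ pairP p) ∧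
    (∀ p : ℕ, 1 ≤ p → (takeInf s (p+1), takeInf t (p+1)) ∈ pairP p →
      ∀ s' ∈ cylN s (p+1), ∀ t' ∈ cylN t (p+1),
        (2:ℝ) ^ (-(p:ℤ) - 1) ≤ |lamInf s' - lamInf t'| ∧
        |lamInf s' - lamInf t'| ≤ (2:ℝ) ^ (-(p:ℤ) + 1)) := by
  classical
  set P : ℕ → Prop :=
    fun n => |lamF (takeInf t n) - lamF (takeInf s n)| ≤ (2:ℝ)^(-(n:ℤ)) with hPdef
  have hpair : ∀ p : ℕ,
      ((takeInf s (p+1), takeInf t (p+1)) ∈ pairP p ↔ (P p ∧ ¬ P (p+1))) := by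
    intro p
    simp only [pairP, Set.mem_setOf_eq, neigh, takeF_takeInf, hPdef]
  have hP0 : P 0 := by
    simp only [hPdef, lamF_takeInf, Finset.range_zero, Finset.sum_empty]
    norm_num
  have hP1 : P 1 := by
    simp only [hPdef, lamF_one]
    rcases Bool.eq_false_or_eq_true (t 0) with h | h <;>
      rcases Bool.eq_false_or_eq_true (s 0) with h' | h' <;>
        simp [h, h'] <;> norm_num [abs_le]
  have hstep : ∀ n, ¬ P n → ¬ P (n+1) := by
    intro n hn hc
    apply hn
    simp only [hPdef] at hc ⊢
    set e : ℝ := (if t n then (2:ℝ)^(-(n:ℤ)-1) else 0) -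
      (if s n then (2:ℝ)^(-(n:ℤ)-1) else 0) with he
    have hpos := two_zpow_pos (-(n:ℤ)-1)
    have hebd : |e| ≤ (2:ℝ)^(-(n:ℤ)-1) := by
      rw [he]
      split_ifs <;> rw [abs_le] <;> constructor <;> linarith
    have heq : lamF (takeInf t n) - lamF (takeInf s n) =
        (lamF (takeInf t (n+1)) - lamF (takeInf s (n+1))) - e := by
      rw [lamF_succ t n, lamF_succ s n, he]; ring
    have htri : |lamF (takeInf t n) - lamF (takeInf s n)| ≤
        |lamF (takeInf t (n+1)) - lamF (takeInf s (n+1))| + |e| := by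
      rw [heq]; exact abs_sub _ _
    rw [zpow_succ_cast n] at hc
    have h2 := two_zpow_sub_one (-(n:ℤ))
    have : (-(n:ℤ)) - 1 = -(n:ℤ) - 1 := rfl
    linarith [htri, hebd, hc]
  have hev : ∃ n, ¬ P n := by
    have hΔ : 0 < |lamInf s - lamInf t| := abs_pos.mpr (sub_ne_zero.mpr hst)
    obtain ⟨n, hn⟩ := exists_pow_lt_of_lt_one
      (by linarith : (0:ℝ) < |lamInf s - lamInf t|/2) (by norm_num : (2⁻¹:ℝ) < 1)
    refine ⟨n, fun hc => ?_⟩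
    simp only [hPdef] at hc
    have hclose := diff_close t s n
    have habs : |lamInf t - lamInf s| = |lamInf s - lamInf t| := abs_sub_comm _ _
    have h1 := abs_sub_abs_le_abs_sub (lamInf t - lamInf s)
      (lamF (takeInf t n) - lamF (takeInf s n))
    rw [two_zpow_neg_nat n] at hc hclose
    linarith
  let N := Nat.find hev
  have hNspec : ¬ P N := Nat.find_spec hev
  have hmin : ∀ m, m < N → P m := fun m hm => not_not.mp (Nat.find_min hev hm)
  have hN2 : 2 ≤ N := by
    by_contra h
    have h01 : N = 0 ∨ N = 1 := by omega
    rcases h01 with h' | h' <;> rw [h'] at hNspec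
    · exact hNspec hP0
    · exact hNspec hP1
  have hprop : ∀ m, N ≤ m → ¬ P m := by
    intro m
    induction m with
    | zero => intro hm; exact absurd hm (by omega)
    | succ k ih =>
      intro hm
      rcases Nat.lt_or_ge N (k+1) with h | h
      · exact hstep k (ih (by omega))
      · have hk : N = k + 1 := by omega
        rw [← hk]; exact hNspec
  set p := N - 1 with hp
  have hp1 : 1 ≤ p := by omega
  have hPp : P p := hmin p (by omega)
  have hPp1 : ¬ P (p+1) := by
    have h : p + 1 = N := by omega
    rw [h]; exact hNspec
  constructor
  · refine ⟨p, ⟨hp1, (hpair p).mpr ⟨hPp, hPp1⟩⟩, ?_⟩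
    rintro q ⟨hq1, hq2⟩
    rw [hpair q] at hq2
    obtain ⟨hQq, hQq1⟩ := hq2
    have h1 : q < N := by
      by_contra h
      exact hprop q (by omega) hQq
    have h2 : N ≤ q + 1 := by
      by_contra h
      exact hQq1 (hmin _ (by omega))
    omega
  · intro q hq1 hqmem s' hs' t' ht'
    rw [hpair q] at hqmem
    obtain ⟨hQ, hNQ⟩ := hqmem
    simp only [hPdef] at hQ hNQ
    have hts1 : takeInf s' (q+1) = takeInf s (q+1) := funext fun i => hs' i i.isLt
    have hts0 : takeInf s' q = takeInf s q :=
      funext fun i => hs' i (Nat.lt_succ_of_lt i.isLt)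
    have htt1 : takeInf t' (q+1) = takeInf t (q+1) := funext fun i => ht' i i.isLt
    have htt0 : takeInf t' q = takeInf t q :=
      funext fun i => ht' i (Nat.lt_succ_of_lt i.isLt)
    rw [zpow_succ_cast q] at hNQ
    have hNQ' : (2:ℝ)^(-(q:ℤ)-1) <
        |lamF (takeInf t (q+1)) - lamF (takeInf s (q+1))| := not_le.mp hNQ
    -- dyadic: the level-(q+1) gap is at least 2^{-q}
    obtain ⟨k1, hk1⟩ := lamF_dyadic (takeInf t (q+1))
    obtain ⟨k2, hk2⟩ := lamF_dyadic (takeInf s (q+1))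
    have hgap : (2:ℝ)^(-(q:ℤ)) ≤
        |lamF (takeInf t (q+1)) - lamF (takeInf s (q+1))| := by
      have hm : |lamF (takeInf t (q+1)) - lamF (takeInf s (q+1))| =
          |((k1 - k2 : ℤ) : ℝ)| * (2:ℝ)^(-((q+1:ℕ):ℤ)) := by
        rw [hk1, hk2, ← sub_mul, abs_mul, abs_of_pos (two_zpow_pos _)]
        push_cast; ring_nf
      rw [hm, zpow_succ_cast q] at hNQ' ⊢
      have hpos := two_zpow_pos (-(q:ℤ)-1)
      have hk : (1:ℝ) < |((k1 - k2 : ℤ) : ℝ)| := by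
        by_contra h
        push_neg at h
        nlinarith
      have hkz : (2:ℤ) ≤ |k1 - k2| := by
        have h1' : (1:ℝ) < ((|k1 - k2| : ℤ) : ℝ) := by rwa [Int.cast_abs]
        have h2' : (1:ℤ) < |k1 - k2| := by exact_mod_cast h1'
        omega
      have hk2' : (2:ℝ) ≤ |((k1 - k2 : ℤ) : ℝ)| := by
        rw [← Int.cast_abs]; exact_mod_cast hkz
      have h2 := two_zpow_sub_one (-(q:ℤ))
      nlinarith
    have hc1 := diff_close s' t' (q+1)
    rw [hts1, htt1] at hc1
    have hc0 := diff_close s' t' q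
    rw [hts0, htt0] at hc0
    rw [zpow_succ_cast q] at hc1
    have hsymm1 : |lamF (takeInf s (q+1)) - lamF (takeInf t (q+1))| =
        |lamF (takeInf t (q+1)) - lamF (takeInf s (q+1))| := abs_sub_comm _ _
    have hsymm0 : |lamF (takeInf s q) - lamF (takeInf t q)| =
        |lamF (takeInf t q) - lamF (takeInf s q)| := abs_sub_comm _ _
    have h2q := two_zpow_sub_one (-(q:ℤ))
    have h2q1 := two_zpow_sub_one (-(q:ℤ)+1)
    constructor
    · -- lower bound
      have h1 := abs_sub_abs_le_abs_sub
        (lamF (takeInf s (q+1)) - lamF (takeInf t (q+1)))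
        ((lamF (takeInf s (q+1)) - lamF (takeInf t (q+1))) -
          (lamInf s' - lamInf t'))
      have he : (lamF (takeInf s (q+1)) - lamF (takeInf t (q+1))) -
          ((lamF (takeInf s (q+1)) - lamF (takeInf t (q+1))) -
            (lamInf s' - lamInf t')) = lamInf s' - lamInf t' := by ring
      rw [he] at h1
      have hc1' : |(lamF (takeInf s (q+1)) - lamF (takeInf t (q+1))) -
          (lamInf s' - lamInf t')| ≤ (2:ℝ)^(-(q:ℤ)-1) := by
        rw [abs_sub_comm]; exact hc1
      linarith [hsymm1 ▸ hgap]
    · -- upper bound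
      have h1 := abs_add_le ((lamInf s' - lamInf t') -
          (lamF (takeInf s q) - lamF (takeInf t q)))
        (lamF (takeInf s q) - lamF (takeInf t q))
      have he : ((lamInf s' - lamInf t') -
          (lamF (takeInf s q) - lamF (takeInf t q))) +
          (lamF (takeInf s q) - lamF (takeInf t q)) = lamInf s' - lamInf t' := by ring
      rw [he] at h1
      have hQ' : |lamF (takeInf s q) - lamF (takeInf t q)| ≤ (2:ℝ)^(-(q:ℤ)) := by
        rw [hsymm0]; exact hQ
      have hm1 : (2:ℝ)^(-(q:ℤ)+1-1) = (2:ℝ)^(-(q:ℤ)) := by congr 1; ring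
      rw [hm1] at h2q1
      linarith
end
end

section
/- Let p ≥ 1, r ≥ p + 1, and u ∈ Σ_r. Then the number of words v ∈ Σ_r with (u|_{p+1}, v|_{p+1}) ∈ 𝒫_p is at most 3·2^{r−p}. -/
open MeasureTheory Filter Set

noncomputable section

namespace NbrCount

def bf (b : Bool) : Fin 2 := if b then 1 else 0

lemma bf_inj : Function.Injective bf := by decide

/-- The natural number whose binary digits (most significant first) are `w`. -/
def N {p : ℕ} (w : Fin p → Bool) : ℕ :=
  (finFunctionFinEquiv (fun i => bf (w i.rev)) : ℕ)

lemma N_inj {p : ℕ} : Function.Injective (N (p := p)) := by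
  intro w w' h
  have h2 : (fun i : Fin p => bf (w i.rev)) = fun i : Fin p => bf (w' i.rev) :=
    finFunctionFinEquiv.injective (Fin.val_injective h)
  funext j
  have := congrFun h2 j.rev
  simpa [Fin.rev_rev] using bf_inj this

lemma N_eq {p : ℕ} (w : Fin p → Bool) : (N w : ℝ) = 2 ^ (p : ℤ) * lamF w := by
  rw [N, finFunctionFinEquiv_apply, lamF, Finset.mul_sum]
  push_cast
  refine Fintype.sum_bijective Fin.rev Fin.rev_bijective _ _ (fun i => ?_)
  have hi : (i : ℕ) < p := i.2
  have hrev : ((i.rev : Fin p) : ℤ) = (p : ℤ) - i - 1 := by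
    have := Fin.val_rev i
    omega
  have hL : ((bf (w i.rev) : ℕ) : ℝ) = if w i.rev then 1 else 0 := by
    cases w i.rev <;> simp [bf]
  rw [hL]
  by_cases h : w i.rev = true
  · simp only [h, if_true, one_mul]
    rw [← zpow_natCast (2:ℝ) (i : ℕ), ← zpow_add₀ (by norm_num : (2:ℝ) ≠ 0)]
    congr 1
    omega
  · simp [h]

end NbrCount

theorem neighbor_pair_counting
    (p r : ℕ) (hp : 1 ≤ p) (hr : p + 1 ≤ r) (u : Fin r → Bool) :
    Set.ncard {v : Fin r → Bool | (takeF u (p+1), takeF v (p+1)) ∈ pairP p}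
      ≤ 3 * 2 ^ (r - p) := by
  classical
  set a : ℤ := (NbrCount.N (takeF u p) : ℤ) with ha
  set T : Finset (ℤ × Bool × (Fin (r - (p+1)) → Bool)) :=
    ({a - 1, a, a + 1} : Finset ℤ) ×ˢ (Finset.univ) with hT
  set f : (Fin r → Bool) → ℤ × Bool × (Fin (r - (p+1)) → Bool) :=
    fun v => ((NbrCount.N (takeF v p) : ℤ), v ⟨p, by omega⟩,
      fun i => v ⟨p + 1 + (i : ℕ), by omega⟩) with hf
  have hmaps : ∀ v ∈ {v : Fin r → Bool | (takeF u (p+1), takeF v (p+1)) ∈ pairP p},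
      f v ∈ (T : Set (ℤ × Bool × (Fin (r - (p+1)) → Bool))) := by
    intro v hv
    obtain ⟨h1, -⟩ := hv
    -- first components: takeF (takeF · (p+1)) p = takeF · p
    have htt : ∀ w : Fin r → Bool, takeF (takeF w (p+1)) p = takeF w p := by
      intro w
      funext i
      have hi : (i : ℕ) < p := i.2
      simp only [takeF]
      rw [dif_pos (show (i : ℕ) < p + 1 by omega)]
    rw [neigh, Set.mem_setOf_eq, htt, htt] at h1
    -- |lamF (takeF v p) - lamF (takeF u p)| ≤ 2 ^ (-(p:ℤ))
    have key : |(NbrCount.N (takeF v p) : ℝ) - (NbrCount.N (takeF u p) : ℝ)| ≤ 1 := by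
      rw [NbrCount.N_eq, NbrCount.N_eq, ← mul_sub, abs_mul,
        abs_of_pos (by positivity : (0:ℝ) < 2 ^ (p:ℤ))]
      calc (2:ℝ) ^ (p:ℤ) * |lamF (takeF v p) - lamF (takeF u p)|
          ≤ 2 ^ (p:ℤ) * 2 ^ (-(p:ℤ)) := by
            exact mul_le_mul_of_nonneg_left h1 (by positivity)
        _ = 1 := by
            rw [← zpow_add₀ (by norm_num : (2:ℝ) ≠ 0)]; simp
    have keyZ : |(NbrCount.N (takeF v p) : ℤ) - a| ≤ 1 := by
      rw [ha]
      have : ((|(NbrCount.N (takeF v p) : ℤ) - (NbrCount.N (takeF u p) : ℤ)| : ℤ) : ℝ)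
          ≤ 1 := by push_cast; exact key
      exact_mod_cast this
    rw [abs_le] at keyZ
    have hfirst : ((NbrCount.N (takeF v p) : ℤ)) ∈ ({a - 1, a, a + 1} : Finset ℤ) := by
      simp only [Finset.mem_insert, Finset.mem_singleton]
      omega
    simp only [hT, Finset.coe_product, Set.mem_prod, Finset.mem_coe, hf]
    exact ⟨hfirst, by simp⟩
  have hinj : Set.InjOn f {v : Fin r → Bool | (takeF u (p+1), takeF v (p+1)) ∈ pairP p} := by
    intro v _ v' _ h
    have h1 : (NbrCount.N (takeF v p) : ℤ) = (NbrCount.N (takeF v' p) : ℤ) :=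
      congrArg Prod.fst h
    have h2 : v ⟨p, by omega⟩ = v' ⟨p, by omega⟩ := congrArg (Prod.fst ∘ Prod.snd) h
    have h3 : ∀ i : Fin (r - (p+1)), v ⟨p + 1 + (i : ℕ), by omega⟩
        = v' ⟨p + 1 + (i : ℕ), by omega⟩ := by
      intro i
      exact congrFun (congrArg (Prod.snd ∘ Prod.snd) h) i
    have htake : takeF v p = takeF v' p := NbrCount.N_inj (by exact_mod_cast h1)
    funext j
    rcases lt_trichotomy (j : ℕ) p with hj | hj | hj
    · have := congrFun htake ⟨(j : ℕ), hj⟩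
      simp only [takeF, dif_pos (by omega : (j : ℕ) < r)] at this
      have hjj : (⟨(j : ℕ), by omega⟩ : Fin r) = j := Fin.ext rfl
      rwa [hjj] at this
    · have hjj : j = ⟨p, by omega⟩ := Fin.ext hj
      rw [hjj]; exact h2
    · have hk : (j : ℕ) - (p + 1) < r - (p + 1) := by omega
      have := h3 ⟨(j : ℕ) - (p + 1), hk⟩
      have hjj : (⟨p + 1 + ((j : ℕ) - (p + 1)), by omega⟩ : Fin r) = j :=
        Fin.ext (by simp; omega)
      rwa [hjj] at this
  have hcard : Set.ncard {v : Fin r → Bool | (takeF u (p+1), takeF v (p+1)) ∈ pairP p}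
      ≤ (T : Set (ℤ × Bool × (Fin (r - (p+1)) → Bool))).ncard :=
    Set.ncard_le_ncard_of_injOn f hmaps hinj (T.finite_toSet)
  rw [Set.ncard_coe_finset, hT, Finset.card_product] at hcard
  have hT1 : ({a - 1, a, a + 1} : Finset ℤ).card ≤ 3 := by
    have h1 := Finset.card_insert_le (a - 1) ({a, a + 1} : Finset ℤ)
    have h2 := Finset.card_insert_le a ({a + 1} : Finset ℤ)
    have h3 : ({a + 1} : Finset ℤ).card = 1 := Finset.card_singleton _
    omega
  have hT2 : (Finset.univ : Finset (Bool × (Fin (r - (p+1)) → Bool))).card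
      = 2 ^ (r - p) := by
    rw [Finset.card_univ, Fintype.card_prod, Fintype.card_bool, Fintype.card_fun,
      Fintype.card_bool, Fintype.card_fin]
    have : 2 ^ (r - (p+1)) * 2 = 2 ^ (r - p) := by
      rw [← pow_succ]
      congr 1
      omega
    omega
  calc Set.ncard {v : Fin r → Bool | (takeF u (p+1), takeF v (p+1)) ∈ pairP p}
      ≤ ({a - 1, a, a + 1} : Finset ℤ).card
        * (Finset.univ : Finset (Bool × (Fin (r - (p+1)) → Bool))).card := hcard
    _ ≤ 3 * 2 ^ (r - p) := by
        rw [hT2]; exact Nat.mul_le_mul_right _ hT1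
end
end

section
/- Let μ be a probability measure on Σ, p, n ≥ 1, r = max(p, n), m ≥ r, D ∈ ℝ and ε > 0. For a finite word w let 𝟏^{(b)}_w = 1 if μ([w]) ∈ [2^{-|w|(D+2ε)}, 2^{-|w|(D−2ε)}] and 𝟏^{(b)}_w = 0 otherwise. Then Σ_{u,v ∈ Σ_m : (u|_{p+1}, v|_{p+1}) ∈ 𝒫_p} 𝟏^{(b)}_{u|_r} · 𝟏^{(b)}_{v|_r} · 𝟏^{(b)}_u · 𝟏^{(b)}_v ≤ 3^{r−p+1} · 2^{2m(D+2ε) − r(D−2ε)}. -/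
open MeasureTheory Filter Set

noncomputable section

open scoped Classical in
noncomputable def indB (μ : Measure Sig) (D ε : ℝ) {n : ℕ} (w : Fin n → Bool) : ℝ :=
  if (μ (cylF w)).toReal ∈
      Set.Icc ((2:ℝ) ^ (-(n:ℝ) * (D + 2*ε))) ((2:ℝ) ^ (-(n:ℝ) * (D - 2*ε))) then 1 else 0

namespace CountingAux

open scoped Classical

lemma measurableSet_cylF {k : ℕ} (w : Fin k → Bool) : MeasurableSet (cylF w) := by
  have h : cylF w = ⋂ i : Fin k, (fun t : Sig => t (i : ℕ)) ⁻¹' {w i} := by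
    ext t; simp [cylF, Set.mem_iInter]
  rw [h]
  exact MeasurableSet.iInter fun i =>
    (measurable_pi_apply (i : ℕ)) (measurableSet_singleton (w i))

lemma cylF_disj {k : ℕ} {w w' : Fin k → Bool} (h : w ≠ w') :
    Disjoint (cylF w) (cylF w') := by
  rw [Set.disjoint_left]
  intro t ht ht'
  exact h (funext fun i => (ht i).symm.trans (ht' i))

lemma sum_cylF_le (μ : MeasureTheory.Measure Sig) [MeasureTheory.IsProbabilityMeasure μ]
    {k : ℕ} (S : Finset (Fin k → Bool)) (A : Set Sig) (hA : ∀ w ∈ S, cylF w ⊆ A) :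
    ∑ w ∈ S, (μ (cylF w)).toReal ≤ (μ A).toReal := by
  have h1 : μ (⋃ w ∈ S, cylF w) = ∑ w ∈ S, μ (cylF w) :=
    MeasureTheory.measure_biUnion_finset
      (fun a _ b _ hab => cylF_disj hab) (fun w _ => measurableSet_cylF w)
  have h2 : ∑ w ∈ S, (μ (cylF w)).toReal = (μ (⋃ w ∈ S, cylF w)).toReal := by
    rw [h1, ENNReal.toReal_sum (fun w _ => MeasureTheory.measure_ne_top μ _)]
  rw [h2]
  exact ENNReal.toReal_mono (MeasureTheory.measure_ne_top μ _)
    (measure_mono (Set.iUnion₂_subset hA))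

lemma takeF_takeF {m a b : ℕ} (w : Fin m → Bool) (hba : b ≤ a) :
    takeF (takeF w a) b = takeF w b := by
  funext i
  have hia : (i : ℕ) < a := lt_of_lt_of_le i.2 hba
  simp only [takeF, dif_pos hia]

lemma cylF_take_subset {m r : ℕ} (hrm : r ≤ m) (v : Fin m → Bool) :
    cylF v ⊆ cylF (takeF v r) := by
  intro t ht i
  have him : (i : ℕ) < m := lt_of_lt_of_le i.2 hrm
  have := ht ⟨(i : ℕ), him⟩
  simp only [takeF, dif_pos him]
  exact this

lemma lamF_takeInf (t : Sig) (k : ℕ) :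
    lamF (takeInf t k) = ∑ i ∈ Finset.range k, (if t i then (2:ℝ) ^ (-(i:ℤ) - 1) else 0) :=
  Fin.sum_univ_eq_sum_range (fun i => if t i then (2:ℝ) ^ (-(i:ℤ) - 1) else 0) k

lemma sum_pow_Ico {a b : ℕ} (hab : a ≤ b) :
    ∑ i ∈ Finset.Ico a b, (2:ℝ) ^ (-(i:ℤ) - 1) = (2:ℝ) ^ (-(a:ℤ)) - (2:ℝ) ^ (-(b:ℤ)) := by
  induction b, hab using Nat.le_induction with
  | base => simp
  | succ b hab ih =>
    rw [Finset.sum_Ico_succ_top hab, ih]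
    have h1 : (-(((b:ℕ)+1 : ℕ) : ℤ)) = (-(b:ℤ) - 1) := by push_cast; ring
    rw [h1]
    have h2 : (2:ℝ) ^ (-(b:ℤ) - 1) = (2:ℝ) ^ (-(b:ℤ)) / 2 := by
      rw [zpow_sub₀ (two_ne_zero)]; norm_num
    rw [h2]; ring

lemma lamF_takeInf_diff (t : Sig) {a b : ℕ} (hab : a ≤ b) :
    0 ≤ lamF (takeInf t b) - lamF (takeInf t a) ∧
    lamF (takeInf t b) - lamF (takeInf t a) ≤ (2:ℝ) ^ (-(a:ℤ)) - (2:ℝ) ^ (-(b:ℤ)) := by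
  rw [lamF_takeInf, lamF_takeInf,
    ← Finset.sum_Ico_eq_sub (fun i => if t i then (2:ℝ) ^ (-(i:ℤ) - 1) else 0) hab]
  constructor
  · apply Finset.sum_nonneg
    intro i _
    split <;> positivity
  · rw [← sum_pow_Ico hab]
    apply Finset.sum_le_sum
    intro i _
    split
    · exact le_rfl
    · positivity

def natVal {k : ℕ} (w : Fin k → Bool) : ℕ :=
  ∑ i : Fin k, (if w i then 2 ^ (k - 1 - (i : ℕ)) else 0)

lemma natVal_eq {k : ℕ} (w : Fin k → Bool) :
    natVal w = ((finFunctionFinEquiv (fun j : Fin k => if w j.rev then (1 : Fin 2) else 0) : Fin (2^k)) : ℕ) := by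
  rw [finFunctionFinEquiv_apply, natVal]
  rw [← Equiv.sum_comp (Fin.revPerm (n := k))
    (fun i => if w i then 2 ^ (k - 1 - (i : ℕ)) else 0)]
  apply Finset.sum_congr rfl
  intro j _
  have hjr : (Fin.revPerm j : Fin k) = j.rev := rfl
  rw [hjr]
  have hval : k - 1 - ((j.rev : Fin k) : ℕ) = (j : ℕ) := by
    have h1 := Fin.val_rev j
    have h2 := j.2
    omega
  rw [hval]
  split <;> simp

lemma natVal_injective {k : ℕ} : Function.Injective (natVal (k := k)) := by
  intro w w' h
  rw [natVal_eq, natVal_eq] at h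
  have h2 := finFunctionFinEquiv.injective (Fin.val_injective h)
  funext i
  have h3 := congrFun h2 i.rev
  simp only [Fin.rev_rev] at h3
  by_cases hw : w i <;> by_cases hw' : w' i <;> simp [hw, hw'] at h3 ⊢

lemma lamF_eq_natVal {k : ℕ} (w : Fin k → Bool) :
    lamF w = (natVal w : ℝ) / 2 ^ k := by
  rw [natVal, Nat.cast_sum, Finset.sum_div, lamF]
  apply Finset.sum_congr rfl
  intro i _
  split_ifs with h
  · have hik : (i : ℕ) < k := i.2
    push_cast
    rw [← zpow_natCast (2:ℝ) (k - 1 - (i : ℕ)), ← zpow_natCast (2:ℝ) k,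
      ← zpow_sub₀ (two_ne_zero)]
    congr 1
    omega
  · simp

open scoped Classical in
lemma card_window {r : ℕ} (p : ℕ) (hpr : p ≤ r) (c : ℝ) :
    (((Finset.univ : Finset (Fin r → Bool)).filter (fun w : Fin r → Bool =>
        c - (2:ℝ) ^ (-(p:ℤ)) ≤ lamF w ∧
        lamF w ≤ c + (2:ℝ) ^ (-(p:ℤ)) + ((2:ℝ) ^ (-(p:ℤ)) - (2:ℝ) ^ (-(r:ℤ))))).card : ℝ)
      ≤ 3 * 2 ^ (r - p) := by
  set P : ℕ := 2 ^ (r - p) with hP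
  set A : ℝ := (c - (2:ℝ) ^ (-(p:ℤ))) * 2 ^ r with hA
  set LZ : ℤ := 3 * (P : ℤ) - 1 with hLZ
  have hpow : (2:ℝ) ^ (-(p:ℤ)) * 2 ^ r = (P : ℝ) := by
    rw [hP]
    push_cast
    rw [← zpow_natCast (2:ℝ) r, ← zpow_add₀ (two_ne_zero), ← zpow_natCast (2:ℝ) (r - p)]
    congr 1
    omega
  have hpowr : (2:ℝ) ^ (-(r:ℤ)) * 2 ^ r = 1 := by
    rw [← zpow_natCast (2:ℝ) r, ← zpow_add₀ (two_ne_zero)]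
    norm_num
  have hcard : ((Finset.univ : Finset (Fin r → Bool)).filter (fun w : Fin r → Bool =>
        c - (2:ℝ) ^ (-(p:ℤ)) ≤ lamF w ∧
        lamF w ≤ c + (2:ℝ) ^ (-(p:ℤ)) + ((2:ℝ) ^ (-(p:ℤ)) - (2:ℝ) ^ (-(r:ℤ))))).card
      ≤ (Finset.Icc ⌈A⌉ ⌊A + (LZ : ℝ)⌋).card := by
    apply Finset.card_le_card_of_injOn (fun w => (natVal w : ℤ))
    · intro w hw
      rw [Finset.mem_coe, Finset.mem_filter] at hw
      obtain ⟨-, h1, h2⟩ := hw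
      have hval : (natVal w : ℝ) = lamF w * 2 ^ r := by
        rw [lamF_eq_natVal w]
        field_simp
      rw [Finset.mem_coe, Finset.mem_Icc]
      constructor
      · rw [Int.ceil_le]
        push_cast
        rw [hval, hA]
        have h2r : (0:ℝ) < 2 ^ r := by positivity
        nlinarith
      · rw [Int.le_floor]
        push_cast
        rw [hval, hA, hLZ]
        push_cast
        have h2r : (0:ℝ) < 2 ^ r := by positivity
        nlinarith [hpow, hpowr]
    · intro w _ w' _ hww'
      simp only at hww'
      exact natVal_injective (by exact_mod_cast hww')
  have hicc : (Finset.Icc ⌈A⌉ ⌊A + (LZ : ℝ)⌋).card ≤ 3 * P := by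
    rw [Int.card_Icc, Int.floor_add_intCast]
    have h1 : ⌊A⌋ ≤ ⌈A⌉ := Int.floor_le_ceil A
    omega
  calc (((Finset.univ : Finset (Fin r → Bool)).filter _).card : ℝ)
      ≤ ((Finset.Icc ⌈A⌉ ⌊A + (LZ : ℝ)⌋).card : ℝ) := by exact_mod_cast hcard
    _ ≤ ((3 * P : ℕ) : ℝ) := by exact_mod_cast hicc
    _ = 3 * 2 ^ (r - p) := by rw [hP]; push_cast; ring

lemma indB_nonneg (μ : MeasureTheory.Measure Sig) (D ε : ℝ) {k : ℕ} (w : Fin k → Bool) :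
    0 ≤ indB μ D ε w := by
  rw [indB]; split <;> norm_num

lemma indB_le_one (μ : MeasureTheory.Measure Sig) (D ε : ℝ) {k : ℕ} (w : Fin k → Bool) :
    indB μ D ε w ≤ 1 := by
  rw [indB]; split <;> norm_num

lemma indB_le_mul (μ : MeasureTheory.Measure Sig) (D ε : ℝ) {k : ℕ} (w : Fin k → Bool) :
    indB μ D ε w ≤ (2:ℝ) ^ ((k:ℝ) * (D + 2*ε)) * (μ (cylF w)).toReal := by
  rw [indB]
  split
  · rename_i h
    have h1 := h.1
    have hpos : (0:ℝ) < (2:ℝ) ^ ((k:ℝ) * (D + 2*ε)) := Real.rpow_pos_of_pos two_pos _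
    have hprod : (2:ℝ) ^ ((k:ℝ) * (D + 2*ε)) * (2:ℝ) ^ (-(k:ℝ) * (D + 2*ε)) = 1 := by
      rw [← Real.rpow_add two_pos]
      norm_num
    calc (1:ℝ) = (2:ℝ) ^ ((k:ℝ) * (D + 2*ε)) * (2:ℝ) ^ (-(k:ℝ) * (D + 2*ε)) := hprod.symm
      _ ≤ (2:ℝ) ^ ((k:ℝ) * (D + 2*ε)) * (μ (cylF w)).toReal :=
          mul_le_mul_of_nonneg_left h1 hpos.le
  · positivity

lemma indB_mul_le (μ : MeasureTheory.Measure Sig) (D ε : ℝ) {k : ℕ} (w : Fin k → Bool) :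
    indB μ D ε w * (μ (cylF w)).toReal ≤ (2:ℝ) ^ (-(k:ℝ) * (D - 2*ε)) := by
  rw [indB]
  split
  · rename_i h
    simpa using h.2
  · simp only [zero_mul]
    positivity

lemma mem_window {m p r : ℕ} (hpr : p ≤ r) (u v : Fin m → Bool)
    (h : (takeF u (p+1), takeF v (p+1)) ∈ pairP p) :
    lamF (takeF (takeF u r) p) - (2:ℝ) ^ (-(p:ℤ)) ≤ lamF (takeF v r) ∧
    lamF (takeF v r) ≤ lamF (takeF (takeF u r) p) + (2:ℝ) ^ (-(p:ℤ)) +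
      ((2:ℝ) ^ (-(p:ℤ)) - (2:ℝ) ^ (-(r:ℤ))) := by
  have hup : takeF (takeF u r) p = takeF u p := takeF_takeF u hpr
  have h1 : takeF (takeF v (p+1)) p = takeF v p := takeF_takeF v (Nat.le_succ p)
  have h2 : takeF (takeF u (p+1)) p = takeF u p := takeF_takeF u (Nat.le_succ p)
  obtain ⟨hn, -⟩ := h
  rw [h1, h2] at hn
  have habs : |lamF (takeF v p) - lamF (takeF u p)| ≤ (2:ℝ) ^ (-(p:ℤ)) := hn
  rw [abs_le] at habs
  set t : Sig := fun j => if hj : j < m then v ⟨j, hj⟩ else false with ht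
  have hv_r : takeF v r = takeInf t r := rfl
  have hv_p : takeF v p = takeInf t p := rfl
  have hd := lamF_takeInf_diff t hpr
  rw [hup, hv_r]
  rw [hv_p] at habs
  constructor
  · linarith [hd.1, habs.1]
  · linarith [hd.2, habs.2]

end CountingAux

open scoped Classical in
theorem counting_lemma
    (μ : Measure Sig) [IsProbabilityMeasure μ]
    (p n r m : ℕ) (hp : 1 ≤ p) (hn : 1 ≤ n) (hr : r = max p n) (hm : r ≤ m)
    (D ε : ℝ) (hε : 0 < ε) :
    (∑ u : Fin m → Bool, ∑ v : Fin m → Bool,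
        (if (takeF u (p+1), takeF v (p+1)) ∈ pairP p then (1:ℝ) else 0) *
          indB μ D ε (takeF u r) * indB μ D ε (takeF v r) * indB μ D ε u * indB μ D ε v)
      ≤ 3 ^ (r - p + 1) * (2:ℝ) ^ (2 * (m:ℝ) * (D + 2*ε) - (r:ℝ) * (D - 2*ε)) := by
  classical
  have hpr : p ≤ r := hr ▸ le_max_left p n
  set K : ℝ := (2:ℝ) ^ ((m:ℝ) * (D + 2*ε)) with hK
  set C : ℝ := (2:ℝ) ^ (-(r:ℝ) * (D - 2*ε)) with hC
  have hKpos : (0:ℝ) < K := Real.rpow_pos_of_pos two_pos _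
  have hCpos : (0:ℝ) < C := Real.rpow_pos_of_pos two_pos _
  set Q : (Fin r → Bool) → (Fin r → Bool) → Prop := fun w w' =>
    lamF (takeF w p) - (2:ℝ) ^ (-(p:ℤ)) ≤ lamF w' ∧
    lamF w' ≤ lamF (takeF w p) + (2:ℝ) ^ (-(p:ℤ)) +
      ((2:ℝ) ^ (-(p:ℤ)) - (2:ℝ) ^ (-(r:ℤ))) with hQdef
  -- inner sum bound
  have inner : ∀ w : Fin r → Bool,
      ∑ v : Fin m → Bool, (if Q w (takeF v r) then (1:ℝ) else 0) *
          indB μ D ε (takeF v r) * (μ (cylF v)).toReal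
        ≤ 3 ^ (r - p + 1) * C := by
    intro w
    have hregroup : (∑ w' : Fin r → Bool,
        ∑ v ∈ Finset.univ.filter (fun v : Fin m → Bool => takeF v r = w'),
          ((if Q w (takeF v r) then (1:ℝ) else 0) *
            indB μ D ε (takeF v r) * (μ (cylF v)).toReal))
        = ∑ v : Fin m → Bool, (if Q w (takeF v r) then (1:ℝ) else 0) *
            indB μ D ε (takeF v r) * (μ (cylF v)).toReal := by
      rw [Finset.sum_fiberwise_eq_sum_filter]
      simp
    rw [← hregroup]
    have hterm : ∀ w' : Fin r → Bool,
        (∑ v ∈ Finset.univ.filter (fun v : Fin m → Bool => takeF v r = w'),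
          ((if Q w (takeF v r) then (1:ℝ) else 0) *
            indB μ D ε (takeF v r) * (μ (cylF v)).toReal))
        ≤ (if Q w w' then (1:ℝ) else 0) * C := by
      intro w'
      have hqnn : (0:ℝ) ≤ (if Q w w' then (1:ℝ) else 0) := by split_ifs <;> norm_num
      have hsum : (∑ v ∈ Finset.univ.filter (fun v : Fin m → Bool => takeF v r = w'),
            ((if Q w (takeF v r) then (1:ℝ) else 0) *
              indB μ D ε (takeF v r) * (μ (cylF v)).toReal))
          = (if Q w w' then (1:ℝ) else 0) * indB μ D ε w' *
            (∑ v ∈ Finset.univ.filter (fun v : Fin m → Bool => takeF v r = w'),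
              (μ (cylF v)).toReal) := by
        rw [Finset.mul_sum]
        apply Finset.sum_congr rfl
        intro v hv
        rw [(Finset.mem_filter.mp hv).2]
      rw [hsum]
      have hfib : (∑ v ∈ Finset.univ.filter (fun v : Fin m → Bool => takeF v r = w'),
            (μ (cylF v)).toReal) ≤ (μ (cylF w')).toReal := by
        apply CountingAux.sum_cylF_le μ _ _
        intro v hv
        rw [← (Finset.mem_filter.mp hv).2]
        exact CountingAux.cylF_take_subset hm v
      calc (if Q w w' then (1:ℝ) else 0) * indB μ D ε w' *
            (∑ v ∈ Finset.univ.filter (fun v : Fin m → Bool => takeF v r = w'),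
              (μ (cylF v)).toReal)
          ≤ (if Q w w' then (1:ℝ) else 0) * indB μ D ε w' * (μ (cylF w')).toReal := by
            apply mul_le_mul_of_nonneg_left hfib
            exact mul_nonneg hqnn (CountingAux.indB_nonneg μ D ε w')
        _ = (if Q w w' then (1:ℝ) else 0) * (indB μ D ε w' * (μ (cylF w')).toReal) := by
            ring
        _ ≤ (if Q w w' then (1:ℝ) else 0) * C := by
            apply mul_le_mul_of_nonneg_left _ hqnn
            rw [hC]
            exact CountingAux.indB_mul_le μ D ε w'
    calc (∑ w' : Fin r → Bool,
          ∑ v ∈ Finset.univ.filter (fun v : Fin m → Bool => takeF v r = w'),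
            ((if Q w (takeF v r) then (1:ℝ) else 0) *
              indB μ D ε (takeF v r) * (μ (cylF v)).toReal))
        ≤ ∑ w' : Fin r → Bool, (if Q w w' then (1:ℝ) else 0) * C :=
          Finset.sum_le_sum (fun w' _ => hterm w')
      _ = ((Finset.univ.filter (fun w' : Fin r → Bool => Q w w')).card : ℝ) * C := by
          rw [← Finset.sum_mul, Finset.sum_boole]
      _ ≤ (3 * 2 ^ (r - p)) * C := by
          apply mul_le_mul_of_nonneg_right _ hCpos.le
          exact CountingAux.card_window p hpr (lamF (takeF w p))
      _ ≤ 3 ^ (r - p + 1) * C := by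
          apply mul_le_mul_of_nonneg_right _ hCpos.le
          have h23 : (2:ℝ) ^ (r - p) ≤ 3 ^ (r - p) := by
            apply pow_le_pow_left₀ (by norm_num) (by norm_num)
          calc (3:ℝ) * 2 ^ (r - p) ≤ 3 * 3 ^ (r - p) := by linarith
            _ = 3 ^ (r - p + 1) := by rw [pow_succ]; ring
  -- pointwise bound
  have hpoint : ∀ u v : Fin m → Bool,
      (if (takeF u (p+1), takeF v (p+1)) ∈ pairP p then (1:ℝ) else 0) *
          indB μ D ε (takeF u r) * indB μ D ε (takeF v r) * indB μ D ε u * indB μ D ε v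
      ≤ (K * (μ (cylF u)).toReal) *
          (K * ((if Q (takeF u r) (takeF v r) then (1:ℝ) else 0) *
            indB μ D ε (takeF v r) * (μ (cylF v)).toReal)) := by
    intro u v
    have hχ : (if (takeF u (p+1), takeF v (p+1)) ∈ pairP p then (1:ℝ) else 0)
        ≤ (if Q (takeF u r) (takeF v r) then (1:ℝ) else 0) := by
      split_ifs with h1 h2
      · exact le_rfl
      · exact absurd (CountingAux.mem_window hpr u v h1) h2
      · norm_num
      · exact le_rfl
    have hqnn : (0:ℝ) ≤ (if Q (takeF u r) (takeF v r) then (1:ℝ) else 0) := by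
      split_ifs <;> norm_num
    have hb3 : indB μ D ε u ≤ K * (μ (cylF u)).toReal := by
      rw [hK]; exact CountingAux.indB_le_mul μ D ε u
    have hb4 : indB μ D ε v ≤ K * (μ (cylF v)).toReal := by
      rw [hK]; exact CountingAux.indB_le_mul μ D ε v
    have t1 : (if (takeF u (p+1), takeF v (p+1)) ∈ pairP p then (1:ℝ) else 0) *
        indB μ D ε (takeF u r) ≤ (if Q (takeF u r) (takeF v r) then (1:ℝ) else 0) := by
      calc _ ≤ (if Q (takeF u r) (takeF v r) then (1:ℝ) else 0) * 1 :=
            mul_le_mul hχ (CountingAux.indB_le_one μ D ε _)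
              (CountingAux.indB_nonneg μ D ε _) hqnn
        _ = _ := mul_one _
    have t2 := mul_le_mul_of_nonneg_right t1 (CountingAux.indB_nonneg μ D ε (takeF v r))
    have t3 := mul_le_mul t2 hb3 (CountingAux.indB_nonneg μ D ε u)
      (mul_nonneg hqnn (CountingAux.indB_nonneg μ D ε (takeF v r)))
    have t4 := mul_le_mul t3 hb4 (CountingAux.indB_nonneg μ D ε v)
      (mul_nonneg (mul_nonneg hqnn (CountingAux.indB_nonneg μ D ε (takeF v r)))
        (mul_nonneg hKpos.le ENNReal.toReal_nonneg))
    calc (if (takeF u (p+1), takeF v (p+1)) ∈ pairP p then (1:ℝ) else 0) *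
          indB μ D ε (takeF u r) * indB μ D ε (takeF v r) * indB μ D ε u * indB μ D ε v
        ≤ (if Q (takeF u r) (takeF v r) then (1:ℝ) else 0) * indB μ D ε (takeF v r) *
            (K * (μ (cylF u)).toReal) * (K * (μ (cylF v)).toReal) := t4
      _ = (K * (μ (cylF u)).toReal) *
          (K * ((if Q (takeF u r) (takeF v r) then (1:ℝ) else 0) *
            indB μ D ε (takeF v r) * (μ (cylF v)).toReal)) := by ring
  have hsumμ : ∑ u : Fin m → Bool, (μ (cylF u)).toReal ≤ 1 := by
    have h := CountingAux.sum_cylF_le μ (Finset.univ : Finset (Fin m → Bool)) Set.univ (fun _ _ => Set.subset_univ _)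
    simpa using h
  have hKKC : K * K * C = (2:ℝ) ^ (2 * (m:ℝ) * (D + 2*ε) - (r:ℝ) * (D - 2*ε)) := by
    rw [hK, hC, ← Real.rpow_add two_pos, ← Real.rpow_add two_pos]
    congr 1
    ring
  calc (∑ u : Fin m → Bool, ∑ v : Fin m → Bool,
        (if (takeF u (p+1), takeF v (p+1)) ∈ pairP p then (1:ℝ) else 0) *
          indB μ D ε (takeF u r) * indB μ D ε (takeF v r) * indB μ D ε u * indB μ D ε v)
      ≤ ∑ u : Fin m → Bool, ∑ v : Fin m → Bool,
          (K * (μ (cylF u)).toReal) *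
            (K * ((if Q (takeF u r) (takeF v r) then (1:ℝ) else 0) *
              indB μ D ε (takeF v r) * (μ (cylF v)).toReal)) :=
        Finset.sum_le_sum fun u _ => Finset.sum_le_sum fun v _ => hpoint u v
    _ = ∑ u : Fin m → Bool,
          (K * (μ (cylF u)).toReal) *
            (K * ∑ v : Fin m → Bool, ((if Q (takeF u r) (takeF v r) then (1:ℝ) else 0) *
              indB μ D ε (takeF v r) * (μ (cylF v)).toReal)) := by
        apply Finset.sum_congr rfl
        intro u _
        rw [← Finset.mul_sum, ← Finset.mul_sum]
    _ ≤ ∑ u : Fin m → Bool,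
          (K * (μ (cylF u)).toReal) * (K * (3 ^ (r - p + 1) * C)) := by
        apply Finset.sum_le_sum
        intro u _
        apply mul_le_mul_of_nonneg_left _ (mul_nonneg hKpos.le ENNReal.toReal_nonneg)
        exact mul_le_mul_of_nonneg_left (inner (takeF u r)) hKpos.le
    _ = (∑ u : Fin m → Bool, (μ (cylF u)).toReal) * (K * (K * (3 ^ (r - p + 1) * C))) := by
        rw [Finset.sum_mul]
        apply Finset.sum_congr rfl
        intro u _
        ring
    _ ≤ 1 * (K * (K * (3 ^ (r - p + 1) * C))) := by
        apply mul_le_mul_of_nonneg_right hsumμ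
        positivity
    _ = 3 ^ (r - p + 1) * (2:ℝ) ^ (2 * (m:ℝ) * (D + 2*ε) - (r:ℝ) * (D - 2*ε)) := by
        rw [one_mul, ← hKKC]
        ring

end
end

section
/- Let π be a real random variable with a density f satisfying ‖f‖_∞ < ∞, let A ≠ 0, B ∈ ℝ, c > 0 and γ > 1. Then E[ max( ((Aπ + B)² + c²)^{-γ/2} , 1 ) ] ≤ 1 + |A|^{-1} c^{1−γ} ‖f‖_∞ ∫_ℝ (z² + 1)^{-γ/2} dz, and the integral ∫_ℝ (z² + 1)^{-γ/2} dz is finite. -/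
open MeasureTheory Filter Set
open scoped ENNReal NNReal

noncomputable section

theorem expectation_kernel_bound_graph_case
    {Ω : Type*} [MeasurableSpace Ω] (P : Measure Ω) [IsProbabilityMeasure P]
    (π : Ω → ℝ) (hπ : Measurable π)
    (f : ℝ → ℝ) (hf : Measurable f)
    (hdens : P.map π = volume.withDensity (fun x => ENNReal.ofReal (f x)))
    (hfb : eLpNorm f ⊤ volume < ⊤)
    (A B c γ : ℝ) (hA : A ≠ 0) (hc : 0 < c) (hγ : 1 < γ) :
    Integrable (fun z : ℝ => ((z ^ 2 + 1) ^ (-γ / 2))) ∧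
    ∫ ω, max (((A * π ω + B) ^ 2 + c ^ 2) ^ (-γ / 2)) 1 ∂P ≤
      1 + |A|⁻¹ * c ^ (1 - γ) * (eLpNorm f ⊤ volume).toReal *
        ∫ z : ℝ, (z ^ 2 + 1) ^ (-γ / 2) := by

  have hγ2 : -γ / 2 ≤ 0 := by linarith
  have hA' : (0:ℝ) < |A| := abs_pos.mpr hA
  -- base integrability
  have hI : Integrable (fun z : ℝ => ((z ^ 2 + 1) ^ (-γ / 2))) := by
    have h := integrable_rpow_neg_one_add_norm_sq (E := ℝ) (μ := volume)
      (r := γ) (by simpa using hγ)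
    simpa [Real.norm_eq_abs, sq_abs, add_comm] using h
  refine ⟨hI, ?_⟩
  set I := ∫ z : ℝ, ((z ^ 2 + 1) ^ (-γ / 2)) with hIdef
  have hInn : 0 ≤ I := integral_nonneg fun z => Real.rpow_nonneg (by positivity) _
  set K := (eLpNorm f ⊤ volume).toReal with hKdef
  have hKnn : 0 ≤ K := ENNReal.toReal_nonneg
  -- the kernel on ℝ
  set G : ℝ → ℝ := fun x => ((A * x + B) ^ 2 + c ^ 2) ^ (-γ / 2) with hGdef
  have hGpos : ∀ x, (0:ℝ) < (A * x + B) ^ 2 + c ^ 2 := fun x => by positivity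
  have hGcont : Continuous G := by
    apply Continuous.rpow_const (by continuity)
    intro x; exact Or.inl (hGpos x).ne'
  have hGnn : ∀ x, 0 ≤ G x := fun x => Real.rpow_nonneg (hGpos x).le _
  -- H on ℝ
  set H : ℝ → ℝ := fun y => (y ^ 2 + c ^ 2) ^ (-γ / 2) with hHdef
  have hHc : ∀ z : ℝ, H (c * z) = c ^ (1 - γ) * c ^ (-(1:ℝ)) * ((z ^ 2 + 1) ^ (-γ / 2)) := by
    intro z
    have h1 : (c * z) ^ 2 + c ^ 2 = c ^ 2 * (z ^ 2 + 1) := by ring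
    have h2 : ((c:ℝ) ^ 2 * (z ^ 2 + 1)) ^ (-γ / 2)
        = ((c:ℝ) ^ 2) ^ (-γ / 2) * (z ^ 2 + 1) ^ (-γ / 2) :=
      Real.mul_rpow (by positivity) (by positivity)
    have h3 : ((c:ℝ) ^ 2) ^ (-γ / 2) = c ^ (-γ) := by
      rw [← Real.rpow_natCast c 2, ← Real.rpow_mul hc.le]
      congr 1; ring
    have h4 : c ^ (-γ) = c ^ (1 - γ) * c ^ (-(1:ℝ)) := by
      rw [← Real.rpow_add hc]
      congr 1; ring
    simp only [hHdef, h1, h2, h3, h4]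
  have hHint : Integrable H := by
    have := (hI.const_mul (c ^ (1 - γ) * c ^ (-(1:ℝ)))).comp_mul_left' (R := c⁻¹)
      (inv_ne_zero hc.ne')
    refine this.congr (Eventually.of_forall fun y => ?_)
    have := hHc (c⁻¹ * y)
    rw [mul_inv_cancel_left₀ hc.ne'] at this
    rw [this]
  have hGint : Integrable G := by
    have h1 : Integrable (fun x => H (x + B)) := hHint.comp_add_right B
    have h2 := h1.comp_mul_left' (R := A) hA
    exact h2
  -- value of ∫ G
  have hintH : ∫ y : ℝ, H y = c ^ (1 - γ) * I := by
    have h1 : (∫ z : ℝ, H (c * z)) = |c⁻¹| • ∫ y : ℝ, H y :=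
      MeasureTheory.Measure.integral_comp_mul_left H c
    have h2 : (∫ z : ℝ, H (c * z)) = c ^ (1 - γ) * c ^ (-(1:ℝ)) * I := by
      rw [show (fun z : ℝ => H (c * z))
          = fun z : ℝ => c ^ (1 - γ) * c ^ (-(1:ℝ)) * ((z ^ 2 + 1) ^ (-γ / 2)) from
          funext hHc, integral_const_mul]
    rw [h2] at h1
    have hc1 : c ^ (-(1:ℝ)) = c⁻¹ := by
      rw [Real.rpow_neg hc.le, Real.rpow_one]
    rw [abs_of_pos (inv_pos.mpr hc), smul_eq_mul] at h1
    have : c⁻¹ ≠ 0 := inv_ne_zero hc.ne'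
    field_simp [hc1] at h1 ⊢
    rw [← h1, hc1, mul_assoc, mul_assoc, mul_comm I c, ← mul_assoc c⁻¹, inv_mul_cancel₀ hc.ne', one_mul]
  have hintG : ∫ x : ℝ, G x = |A|⁻¹ * (c ^ (1 - γ) * I) := by
    have h1 : (∫ x : ℝ, H (A * x + B)) = |A⁻¹| • ∫ x : ℝ, H (x + B) :=
      MeasureTheory.Measure.integral_comp_mul_left (fun x => H (x + B)) A
    have h2 : (∫ x : ℝ, H (x + B)) = ∫ y : ℝ, H y :=
      integral_add_right_eq_self H B
    rw [h2, hintH, smul_eq_mul, abs_inv] at h1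
    exact h1
  -- pull back to Ω
  set g : Ω → ℝ := fun ω => ((A * π ω + B) ^ 2 + c ^ 2) ^ (-γ / 2) with hgdef
  have hgG : ∀ ω, g ω = G (π ω) := fun ω => rfl
  have hgmeas : Measurable g := hGcont.measurable.comp hπ
  have hgnn : ∀ ω, 0 ≤ g ω := fun ω => hGnn (π ω)
  have hgbd : ∀ ω, g ω ≤ (c ^ 2) ^ (-γ / 2) := by
    intro ω
    exact Real.rpow_le_rpow_of_nonpos (by positivity) (by nlinarith [sq_nonneg (A * π ω + B)]) hγ2
  have hgint : Integrable g P := by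
    refine (integrable_const ((c ^ 2) ^ (-γ / 2))).mono'
      hgmeas.aestronglyMeasurable (Eventually.of_forall fun ω => ?_)
    rw [Real.norm_eq_abs, abs_of_nonneg (hgnn ω)]
    exact hgbd ω
  -- step 1 : ∫ max ≤ 1 + ∫ g
  have hstep1 : (∫ ω, max (g ω) 1 ∂P) ≤ 1 + ∫ ω, g ω ∂P := by
    have hmax_int : Integrable (fun ω => max (g ω) 1) P := by
      refine (integrable_const (max ((c ^ 2) ^ (-γ / 2)) 1)).mono'
        (hgmeas.max measurable_const).aestronglyMeasurable (Eventually.of_forall fun ω => ?_)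
      rw [Real.norm_eq_abs, abs_of_nonneg (le_max_of_le_right zero_le_one)]
      exact max_le_max (hgbd ω) le_rfl
    have : (∫ ω, max (g ω) 1 ∂P) ≤ ∫ ω, (1 + g ω) ∂P := by
      refine integral_mono hmax_int ((integrable_const (1:ℝ)).add hgint) fun ω => ?_
      rcases max_cases (g ω) 1 with ⟨h, _⟩ | ⟨h, _⟩
      · rw [h]; linarith
      · rw [h]; linarith [hgnn ω]
    calc (∫ ω, max (g ω) 1 ∂P) ≤ ∫ ω, (1 + g ω) ∂P := this
      _ = 1 + ∫ ω, g ω ∂P := by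
          rw [integral_add (integrable_const 1) hgint, integral_const]
          simp
  -- step 2 : ∫ g ≤ K * ∫ G
  have hmapint : ∫ ω, g ω ∂P = ∫ x, G x ∂(P.map π) := by
    rw [integral_map hπ.aemeasurable hGcont.aestronglyMeasurable]
  have hwd : ∫ x, G x ∂(P.map π) = ∫ x : ℝ, (Real.toNNReal (f x) : ℝ) * G x := by
    rw [hdens]
    have hmeas : Measurable fun x => Real.toNNReal (f x) := hf.real_toNNReal
    have : (fun x => ENNReal.ofReal (f x)) = fun x => ((Real.toNNReal (f x) : ℝ≥0) : ℝ≥0∞) := by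
      funext x; rfl
    rw [this, integral_withDensity_eq_integral_smul hmeas]
    simp [NNReal.smul_def, smul_eq_mul]
  have haebd : ∀ᵐ x : ℝ, (Real.toNNReal (f x) : ℝ) ≤ K := by
    have h1 : ∀ᵐ x : ℝ, (‖f x‖₊ : ℝ≥0∞) ≤ eLpNormEssSup f volume :=
      ae_le_eLpNormEssSup
    have htop : eLpNormEssSup f volume < ⊤ := by
      rwa [← eLpNorm_exponent_top]
    filter_upwards [h1] with x hx
    have : (‖f x‖₊ : ℝ) ≤ K := by
      rw [hKdef, eLpNorm_exponent_top]
      exact ENNReal.toReal_mono htop.ne (by exact_mod_cast hx) |>.trans_eq' (by simp)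
    calc (Real.toNNReal (f x) : ℝ) ≤ ‖f x‖ := by
          rw [Real.coe_toNNReal', Real.norm_eq_abs]
          exact max_le (le_abs_self _) (abs_nonneg _)
      _ = (‖f x‖₊ : ℝ) := by simp
      _ ≤ K := this
  have hstep2 : ∫ ω, g ω ∂P ≤ K * ∫ x : ℝ, G x := by
    rw [hmapint, hwd]
    have : ∫ x : ℝ, (Real.toNNReal (f x) : ℝ) * G x ≤ ∫ x : ℝ, K * G x := by
      refine integral_mono_of_nonneg (Eventually.of_forall fun x => by positivity)
        (hGint.const_mul K) ?_
      filter_upwards [haebd] with x hx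
      exact mul_le_mul_of_nonneg_right hx (hGnn x)
    rwa [integral_const_mul] at this
  -- combine
  calc ∫ ω, max (((A * π ω + B) ^ 2 + c ^ 2) ^ (-γ / 2)) 1 ∂P
      = ∫ ω, max (g ω) 1 ∂P := rfl
    _ ≤ 1 + ∫ ω, g ω ∂P := hstep1
    _ ≤ 1 + K * ∫ x : ℝ, G x := by linarith [hstep2]
    _ = 1 + |A|⁻¹ * c ^ (1 - γ) * K * I := by rw [hintG]; ring
end
end

section
/- Let π be a real random variable with a density f satisfying ‖f‖_∞ < ∞, let A ≠ 0, B ∈ ℝ, α > 0 and γ ∈ (0,1). Then E[ max( |Aπ + B|^{-γ} , 1 ) · 𝟏_{\{ 0 < |Aπ + B| ≤ α \}} ] ≤ 1 + |A|^{-1} ‖f‖_∞ · 2α^{1−γ}/(1−γ). -/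
open MeasureTheory Filter Set

noncomputable section

open scoped ENNReal

lemma aux_lintegral_affine (g : ℝ → ℝ≥0∞) {A : ℝ} (B : ℝ) (hA : A ≠ 0) :
    ∫⁻ x, g (A * x + B) = ENNReal.ofReal |A|⁻¹ * ∫⁻ x, g x := by
  set e := (Homeomorph.mulLeft₀ A hA).toMeasurableEquiv with he
  have hco : (⇑e : ℝ → ℝ) = (A * ·) := rfl
  have h1 : ∫⁻ a, g (a + B) ∂(Measure.map (⇑e) volume) = ∫⁻ x, g (A * x + B) :=
    MeasureTheory.lintegral_map_equiv (fun y => g (y + B)) e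
  have h2 : Measure.map (⇑e) volume = ENNReal.ofReal |A⁻¹| • volume := by
    rw [hco]; exact Real.map_volume_mul_left hA
  rw [← h1, h2, lintegral_smul_measure, lintegral_add_right_eq_self (fun y => g y) B, abs_inv, smul_eq_mul]

open scoped ENNReal in
lemma aux_lintegral_neg' (g : ℝ → ℝ≥0∞) : ∫⁻ x, g (-x) = ∫⁻ x, g x := by
  have hco : (⇑(MeasurableEquiv.neg ℝ) : ℝ → ℝ) = (Neg.neg) := rfl
  have h1 : ∫⁻ a, g a ∂(Measure.map (⇑(MeasurableEquiv.neg ℝ)) volume) = ∫⁻ x, g (-x) :=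
    MeasureTheory.lintegral_map_equiv g (MeasurableEquiv.neg ℝ)
  rw [← h1, hco, Measure.map_neg_eq_self (volume : Measure ℝ)]

open scoped ENNReal in
lemma aux_Ioc_rpow {α γ : ℝ} (hα : 0 < α) (hγ1 : γ < 1) :
    ∫⁻ u, (Set.Ioc (0:ℝ) α).indicator (fun u => ENNReal.ofReal (u ^ (-γ))) u
      = ENNReal.ofReal (α ^ (1 - γ) / (1 - γ)) := by
  rw [lintegral_indicator measurableSet_Ioc]
  have hint : IntegrableOn (fun u : ℝ => u ^ (-γ)) (Set.Ioc 0 α) volume := by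
    have := (intervalIntegral.intervalIntegrable_rpow' (a := 0) (b := α)
      (by linarith : (-1:ℝ) < -γ))
    simpa [intervalIntegrable_iff, uIoc_of_le hα.le] using this
  have hnn : 0 ≤ᵐ[volume.restrict (Set.Ioc (0:ℝ) α)] fun u : ℝ => u ^ (-γ) := by
    filter_upwards [ae_restrict_mem measurableSet_Ioc] with x hx
    exact Real.rpow_nonneg hx.1.le _
  rw [← ofReal_integral_eq_lintegral_ofReal hint hnn]
  congr 1
  rw [← intervalIntegral.integral_of_le hα.le,
    integral_rpow (Or.inl (by linarith : (-1:ℝ) < -γ))]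
  rw [Real.zero_rpow (by linarith : -γ + 1 ≠ 0)]
  ring_nf

open scoped ENNReal in
lemma aux_kernel_int {α γ : ℝ} (hα : 0 < α) (hγ1 : γ < 1) :
    ∫⁻ u, ({u : ℝ | 0 < |u| ∧ |u| ≤ α}).indicator
        (fun u => ENNReal.ofReal (|u| ^ (-γ))) u
      ≤ ENNReal.ofReal (2 * α ^ (1 - γ) / (1 - γ)) := by
  set F : ℝ → ℝ≥0∞ := fun u => (Set.Ioc (0:ℝ) α).indicator (fun u => ENNReal.ofReal (u ^ (-γ))) u
  have hpt : ∀ u : ℝ, ({u : ℝ | 0 < |u| ∧ |u| ≤ α}).indicator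
      (fun u => ENNReal.ofReal (|u| ^ (-γ))) u ≤ F u + F (-u) := by
    intro u
    rcases lt_trichotomy u 0 with hu | hu | hu
    · by_cases h : -α ≤ u
      · have h1 : u ∈ {u : ℝ | 0 < |u| ∧ |u| ≤ α} := by
          constructor
          · rw [abs_of_neg hu]; linarith
          · rw [abs_of_neg hu]; linarith
        have h2 : -u ∈ Set.Ioc (0:ℝ) α := ⟨by linarith, by linarith⟩
        simp only [F, Set.indicator_of_mem h1, Set.indicator_of_mem h2, abs_of_neg hu]
        exact le_add_self
      · have h1 : u ∉ {u : ℝ | 0 < |u| ∧ |u| ≤ α} := by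
          intro hmem
          have := hmem.2
          rw [abs_of_neg hu] at this
          exact h (by linarith)
        rw [Set.indicator_of_notMem h1]
        exact zero_le
    · subst hu
      have h1 : (0:ℝ) ∉ {u : ℝ | 0 < |u| ∧ |u| ≤ α} := by
        intro hmem; simpa using hmem.1
      rw [Set.indicator_of_notMem h1]
      exact zero_le
    · by_cases h : u ≤ α
      · have h1 : u ∈ {u : ℝ | 0 < |u| ∧ |u| ≤ α} := by
          constructor
          · rw [abs_of_pos hu]; exact hu
          · rw [abs_of_pos hu]; exact h
        have h2 : u ∈ Set.Ioc (0:ℝ) α := ⟨hu, h⟩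
        simp only [F, Set.indicator_of_mem h1, Set.indicator_of_mem h2, abs_of_pos hu]
        exact self_le_add_right _ _
      · have h1 : u ∉ {u : ℝ | 0 < |u| ∧ |u| ≤ α} := by
          intro hmem
          have := hmem.2
          rw [abs_of_pos hu] at this
          exact h this
        rw [Set.indicator_of_notMem h1]
        exact zero_le
  calc ∫⁻ u, ({u : ℝ | 0 < |u| ∧ |u| ≤ α}).indicator
        (fun u => ENNReal.ofReal (|u| ^ (-γ))) u
      ≤ ∫⁻ u, (F u + F (-u)) := lintegral_mono hpt
    _ = (∫⁻ u, F u) + ∫⁻ u, F (-u) := by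
        rw [lintegral_add_left]
        have : Measurable (fun u : ℝ => u ^ (-γ)) := by fun_prop
        exact (this.ennreal_ofReal).indicator measurableSet_Ioc
    _ = (∫⁻ u, F u) + ∫⁻ u, F u := by rw [aux_lintegral_neg' F]
    _ = ENNReal.ofReal (α ^ (1 - γ) / (1 - γ)) + ENNReal.ofReal (α ^ (1 - γ) / (1 - γ)) := by
        rw [aux_Ioc_rpow hα hγ1]
    _ ≤ ENNReal.ofReal (2 * α ^ (1 - γ) / (1 - γ)) := by
        have hnn : (0:ℝ) ≤ α ^ (1 - γ) / (1 - γ) :=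
          div_nonneg (Real.rpow_nonneg hα.le _) (by linarith)
        rw [← ENNReal.ofReal_add hnn hnn]
        apply ENNReal.ofReal_le_ofReal
        rw [← add_div]
        apply le_of_eq
        ring

theorem expectation_kernel_bound_range_case
    {Ω : Type*} [MeasurableSpace Ω] (P : Measure Ω) [IsProbabilityMeasure P]
    (π : Ω → ℝ) (hπ : Measurable π)
    (f : ℝ → ℝ) (hf : Measurable f)
    (hdens : P.map π = volume.withDensity (fun x => ENNReal.ofReal (f x)))
    (hfb : eLpNorm f ⊤ volume < ⊤)
    (A B α γ : ℝ) (hA : A ≠ 0) (hα : 0 < α) (hγ0 : 0 < γ) (hγ1 : γ < 1) :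
    ∫⁻ ω, ENNReal.ofReal
        (Set.indicator {ω' : Ω | 0 < |A * π ω' + B| ∧ |A * π ω' + B| ≤ α}
          (fun ω' => max (|A * π ω' + B| ^ (-γ)) 1) ω) ∂P
      ≤ ENNReal.ofReal
          (1 + |A|⁻¹ * (eLpNorm f ⊤ volume).toReal * (2 * α ^ (1 - γ) / (1 - γ))) := by
  classical
  set S : Set ℝ := {x : ℝ | 0 < |A * x + B| ∧ |A * x + B| ≤ α} with hSdef
  have hSm : MeasurableSet S := by
    have hc : Measurable (fun x : ℝ => |A * x + B|) := by fun_prop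
    have : S = {x : ℝ | 0 < |A * x + B|} ∩ {x : ℝ | |A * x + B| ≤ α} := rfl
    rw [this]
    exact (measurableSet_lt measurable_const hc).inter (measurableSet_le hc measurable_const)
  set g : ℝ → ℝ≥0∞ :=
    fun x => S.indicator (fun x => ENNReal.ofReal (max (|A * x + B| ^ (-γ)) 1)) x with hgdef
  have hmf : Measurable (fun x : ℝ => ENNReal.ofReal (max (|A * x + B| ^ (-γ)) 1)) := by
    fun_prop
  have hg_meas : Measurable g := hmf.indicator hSm
  have hpt : ∀ ω, ENNReal.ofReal
      (Set.indicator {ω' : Ω | 0 < |A * π ω' + B| ∧ |A * π ω' + B| ≤ α}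
        (fun ω' => max (|A * π ω' + B| ^ (-γ)) 1) ω) = g (π ω) := by
    intro ω
    by_cases h : 0 < |A * π ω + B| ∧ |A * π ω + B| ≤ α
    · rw [Set.indicator_of_mem (show ω ∈ {ω' : Ω | 0 < |A * π ω' + B| ∧ |A * π ω' + B| ≤ α}
        from h)]
      exact (Set.indicator_of_mem (show π ω ∈ S from h)
        (fun x => ENNReal.ofReal (max (|A * x + B| ^ (-γ)) 1))).symm
    · rw [Set.indicator_of_notMem (show ω ∉ {ω' : Ω | 0 < |A * π ω' + B| ∧ |A * π ω' + B| ≤ α}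
        from h), ENNReal.ofReal_zero]
      exact (Set.indicator_of_notMem (show π ω ∉ S from h)
        (fun x => ENNReal.ofReal (max (|A * x + B| ^ (-γ)) 1))).symm
  have step1 : ∫⁻ ω, ENNReal.ofReal
        (Set.indicator {ω' : Ω | 0 < |A * π ω' + B| ∧ |A * π ω' + B| ≤ α}
          (fun ω' => max (|A * π ω' + B| ^ (-γ)) 1) ω) ∂P
      = ∫⁻ x, ENNReal.ofReal (f x) * g x ∂volume := by
    calc ∫⁻ ω, ENNReal.ofReal
          (Set.indicator {ω' : Ω | 0 < |A * π ω' + B| ∧ |A * π ω' + B| ≤ α}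
            (fun ω' => max (|A * π ω' + B| ^ (-γ)) 1) ω) ∂P
        = ∫⁻ ω, g (π ω) ∂P := lintegral_congr hpt
      _ = ∫⁻ x, g x ∂(P.map π) := (lintegral_map hg_meas hπ).symm
      _ = ∫⁻ x, g x ∂(volume.withDensity fun x => ENNReal.ofReal (f x)) := by rw [hdens]
      _ = ∫⁻ x, ((fun x => ENNReal.ofReal (f x)) * g) x ∂volume :=
          lintegral_withDensity_eq_lintegral_mul volume hf.ennreal_ofReal hg_meas
      _ = ∫⁻ x, ENNReal.ofReal (f x) * g x ∂volume := rfl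
  set ind1 : ℝ → ℝ≥0∞ := fun x => S.indicator (fun _ => (1:ℝ≥0∞)) x
  set ind2 : ℝ → ℝ≥0∞ := fun x => S.indicator (fun x => ENNReal.ofReal (|A * x + B| ^ (-γ))) x
    with hind2def
  have hgle : ∀ x, g x ≤ ind1 x + ind2 x := by
    intro x
    by_cases h : x ∈ S
    · simp only [hgdef, ind1, hind2def, Set.indicator_of_mem h]
      have ha : (0:ℝ) ≤ |A * x + B| ^ (-γ) := Real.rpow_nonneg (abs_nonneg _) _
      have : max (|A * x + B| ^ (-γ)) 1 ≤ 1 + |A * x + B| ^ (-γ) :=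
        max_le (by linarith) (by linarith)
      calc ENNReal.ofReal (max (|A * x + B| ^ (-γ)) 1)
          ≤ ENNReal.ofReal (1 + |A * x + B| ^ (-γ)) := ENNReal.ofReal_le_ofReal this
        _ = 1 + ENNReal.ofReal (|A * x + B| ^ (-γ)) := by
            rw [ENNReal.ofReal_add zero_le_one ha, ENNReal.ofReal_one]
    · simp only [hgdef, ind1, hind2def, Set.indicator_of_notMem h, zero_add, add_zero, le_refl]
  have hM : eLpNorm f ⊤ volume ≠ ⊤ := hfb.ne
  have hae : ∀ᵐ x ∂(volume : Measure ℝ), ENNReal.ofReal (f x) ≤ eLpNorm f ⊤ volume := by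
    filter_upwards [ae_le_eLpNormEssSup (f := f) (μ := volume)] with x hx
    calc ENNReal.ofReal (f x) ≤ (‖f x‖₊ : ℝ≥0∞) := Real.ofReal_le_enorm (f x)
      _ ≤ eLpNorm f ⊤ volume := by rw [eLpNorm_exponent_top]; exact hx
  have hT1 : ∫⁻ x, ENNReal.ofReal (f x) * ind1 x ∂volume ≤ 1 := by
    have heq : ∀ x, ENNReal.ofReal (f x) * ind1 x = S.indicator (fun x => ENNReal.ofReal (f x)) x := by
      intro x
      by_cases h : x ∈ S
      · simp [ind1, Set.indicator_of_mem h]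
      · simp [ind1, Set.indicator_of_notMem h]
    calc ∫⁻ x, ENNReal.ofReal (f x) * ind1 x ∂volume
        = ∫⁻ x, S.indicator (fun x => ENNReal.ofReal (f x)) x ∂volume := lintegral_congr heq
      _ = ∫⁻ x in S, ENNReal.ofReal (f x) ∂volume := lintegral_indicator hSm _
      _ = (volume.withDensity fun x => ENNReal.ofReal (f x)) S :=
          (withDensity_apply _ hSm).symm
      _ = (P.map π) S := by rw [hdens]
      _ = P (π ⁻¹' S) := Measure.map_apply hπ hSm
      _ ≤ 1 := prob_le_one
  have hT2 : ∫⁻ x, ENNReal.ofReal (f x) * ind2 x ∂volume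
      ≤ eLpNorm f ⊤ volume *
        (ENNReal.ofReal |A|⁻¹ * ENNReal.ofReal (2 * α ^ (1 - γ) / (1 - γ))) := by
    have hstep : ∫⁻ x, ENNReal.ofReal (f x) * ind2 x ∂volume
        ≤ ∫⁻ x, eLpNorm f ⊤ volume * ind2 x ∂volume := by
      apply lintegral_mono_ae
      filter_upwards [hae] with x hx
      exact mul_le_mul_left hx _
    have hind2eq : ∀ x : ℝ, ind2 x
        = ({u : ℝ | 0 < |u| ∧ |u| ≤ α}).indicator
            (fun u => ENNReal.ofReal (|u| ^ (-γ))) (A * x + B) := by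
      intro x
      by_cases h : x ∈ S
      · exact (Set.indicator_of_mem h _).trans
          (Set.indicator_of_mem (show A * x + B ∈ {u : ℝ | 0 < |u| ∧ |u| ≤ α} from h)
            (fun u => ENNReal.ofReal (|u| ^ (-γ)))).symm
      · exact (Set.indicator_of_notMem h _).trans
          (Set.indicator_of_notMem (show A * x + B ∉ {u : ℝ | 0 < |u| ∧ |u| ≤ α} from h)
            (fun u => ENNReal.ofReal (|u| ^ (-γ)))).symm
    calc ∫⁻ x, ENNReal.ofReal (f x) * ind2 x ∂volume
        ≤ ∫⁻ x, eLpNorm f ⊤ volume * ind2 x ∂volume := hstep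
      _ = eLpNorm f ⊤ volume * ∫⁻ x, ind2 x ∂volume := lintegral_const_mul' _ _ hM
      _ ≤ eLpNorm f ⊤ volume *
          (ENNReal.ofReal |A|⁻¹ * ENNReal.ofReal (2 * α ^ (1 - γ) / (1 - γ))) := by
          apply mul_le_mul_right
          calc ∫⁻ x, ind2 x ∂volume
              = ∫⁻ x, ({u : ℝ | 0 < |u| ∧ |u| ≤ α}).indicator
                  (fun u => ENNReal.ofReal (|u| ^ (-γ))) (A * x + B) ∂volume :=
                lintegral_congr hind2eq
            _ = ENNReal.ofReal |A|⁻¹ * ∫⁻ u, ({u : ℝ | 0 < |u| ∧ |u| ≤ α}).indicator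
                  (fun u => ENNReal.ofReal (|u| ^ (-γ))) u ∂volume :=
                aux_lintegral_affine _ B hA
            _ ≤ ENNReal.ofReal |A|⁻¹ * ENNReal.ofReal (2 * α ^ (1 - γ) / (1 - γ)) :=
                mul_le_mul_right (aux_kernel_int hα hγ1) _
  have hsum : ∫⁻ x, ENNReal.ofReal (f x) * g x ∂volume
      ≤ (∫⁻ x, ENNReal.ofReal (f x) * ind1 x ∂volume)
        + ∫⁻ x, ENNReal.ofReal (f x) * ind2 x ∂volume := by
    calc ∫⁻ x, ENNReal.ofReal (f x) * g x ∂volume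
        ≤ ∫⁻ x, (ENNReal.ofReal (f x) * ind1 x + ENNReal.ofReal (f x) * ind2 x) ∂volume := by
          apply lintegral_mono
          intro x
          calc ENNReal.ofReal (f x) * g x
              ≤ ENNReal.ofReal (f x) * (ind1 x + ind2 x) := mul_le_mul_right (hgle x) _
            _ = ENNReal.ofReal (f x) * ind1 x + ENNReal.ofReal (f x) * ind2 x := mul_add _ _ _
      _ = (∫⁻ x, ENNReal.ofReal (f x) * ind1 x ∂volume)
          + ∫⁻ x, ENNReal.ofReal (f x) * ind2 x ∂volume := by
          apply lintegral_add_left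
          exact hf.ennreal_ofReal.mul (measurable_const.indicator hSm)
  rw [step1]
  have hc : (0:ℝ) ≤ 2 * α ^ (1 - γ) / (1 - γ) :=
    div_nonneg (mul_nonneg (by norm_num) (Real.rpow_nonneg hα.le _)) (by linarith)
  have hfinal : (1:ℝ≥0∞) + eLpNorm f ⊤ volume *
        (ENNReal.ofReal |A|⁻¹ * ENNReal.ofReal (2 * α ^ (1 - γ) / (1 - γ)))
      = ENNReal.ofReal
          (1 + |A|⁻¹ * (eLpNorm f ⊤ volume).toReal * (2 * α ^ (1 - γ) / (1 - γ))) := by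
    rw [← ENNReal.ofReal_toReal hM,
      ← ENNReal.ofReal_mul (inv_nonneg.mpr (abs_nonneg A)),
      ← ENNReal.ofReal_mul ENNReal.toReal_nonneg,
      ← ENNReal.ofReal_one, ← ENNReal.ofReal_add (by norm_num)
        (mul_nonneg ENNReal.toReal_nonneg (mul_nonneg (inv_nonneg.mpr (abs_nonneg A)) hc))]
    rw [ENNReal.toReal_ofReal ENNReal.toReal_nonneg]
    congr 1
    ring
  calc ∫⁻ x, ENNReal.ofReal (f x) * g x ∂volume
      ≤ (∫⁻ x, ENNReal.ofReal (f x) * ind1 x ∂volume)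
        + ∫⁻ x, ENNReal.ofReal (f x) * ind2 x ∂volume := hsum
    _ ≤ 1 + eLpNorm f ⊤ volume *
        (ENNReal.ofReal |A|⁻¹ * ENNReal.ofReal (2 * α ^ (1 - γ) / (1 - γ))) :=
        add_le_add hT1 hT2
    _ = ENNReal.ofReal
          (1 + |A|⁻¹ * (eLpNorm f ⊤ volume).toReal * (2 * α ^ (1 - γ) / (1 - γ))) := hfinal
end
end
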